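/- arXiv:0812.4471 — 5 statements merged into one kernel-verified Lean document; each statement's English description precedes it below -/
import Mathlib

section
/- Let g_1, …, g_n be independent unit-rate exponential random variables, let w_1, …, w_n be positive real numbers, and let θ : (0,∞) → (0,∞) be a function such that θ(ω) → 0 as ω → ∞ and lim_{ω→∞} log θ(ω) / log ω = θ_∞ (so θ_∞ ≤ 0). Then limsup_{ω→∞} log P[∑_{k=1}^n w_k g_k < θ(ω)] / log ω ≤ n · θ_∞. -/
open MeasureTheory ProbabilityTheory Filter

/-- A real random variable `g` is unit-rate exponential (w.r.t. measure `ℙ`) if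
`ℙ[g > x] = e^{-x}` for all `x ≥ 0`. -/
def IsUnitExp {Ω : Type*} [MeasureSpace Ω] (g : Ω → ℝ) : Prop :=
  ∀ x : ℝ, 0 ≤ x → ℙ {ω | x < g ω} = ENNReal.ofReal (Real.exp (-x))

lemma aux_exp_lb (t : ℝ) (ht : 0 < t) (ht1 : t ≤ 1) :
    t / Real.exp 1 ≤ 1 - Real.exp (-t) := by
  have h1 : t + 1 ≤ Real.exp t := Real.add_one_le_exp t
  have h2 : Real.exp t ≤ Real.exp 1 := Real.exp_le_exp.2 ht1
  have h4 : (0:ℝ) < Real.exp t := Real.exp_pos t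
  have h5 : (0:ℝ) < Real.exp 1 := Real.exp_pos 1
  have key : 1 - Real.exp (-t) = (Real.exp t - 1) / Real.exp t := by
    rw [Real.exp_neg]; field_simp
  rw [key]
  have hle1 : t / Real.exp 1 ≤ t / Real.exp t := by gcongr
  have hle2 : t / Real.exp t ≤ (Real.exp t - 1) / Real.exp t := by
    gcongr
    linarith
  linarith

lemma unitExp_cdf_toReal {Ω : Type*} [MeasureSpace Ω]
    [IsProbabilityMeasure (ℙ : Measure Ω)]
    {g : Ω → ℝ} (hm : Measurable g) (he : IsUnitExp g) {c : ℝ} (hc : 0 ≤ c) :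
    (ℙ {ω | g ω ≤ c}).toReal = 1 - Real.exp (-c) := by
  have h1 : {ω | g ω ≤ c} = {ω | c < g ω}ᶜ := by ext ω; simp [not_lt]
  have hms : MeasurableSet {ω | c < g ω} := hm measurableSet_Ioi
  rw [h1, measure_compl hms (measure_ne_top _ _), he c hc, measure_univ]
  have hle : ENNReal.ofReal (Real.exp (-c)) ≤ 1 :=
    ENNReal.ofReal_le_one.2 (Real.exp_le_one_iff.2 (by linarith))
  rw [ENNReal.toReal_sub_of_le hle ENNReal.one_ne_top]
  rw [ENNReal.toReal_one, ENNReal.toReal_ofReal (Real.exp_pos _).le]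

/-- if `g_1, …, g_n` are independent unit-rate exponential random variables,
`w_1, …, w_n > 0`, and `θ : (0,∞) → (0,∞)` satisfies `θ(ω) → 0` as `ω → ∞` and
`log θ(ω) / log ω → θ_∞`, then
`limsup_{ω→∞} log P[∑ k, w k * g k < θ(ω)] / log ω ≤ n * θ_∞`. -/
theorem weighted_exp_sum_lower_tail_exponent
    {Ω : Type*} [MeasureSpace Ω] [IsProbabilityMeasure (ℙ : Measure Ω)]
    (n : ℕ) (g : Fin n → Ω → ℝ) (w : Fin n → ℝ)
    (hmeas : ∀ k, Measurable (g k))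
    (hindep : iIndepFun g ℙ)
    (hexp : ∀ k, IsUnitExp (g k))
    (hw : ∀ k, 0 < w k)
    (θ : ℝ → ℝ) (θinf : ℝ)
    (hθpos : ∀ x : ℝ, 0 < x → 0 < θ x)
    (hθ0 : Tendsto θ atTop (nhds 0))
    (hθexp : Tendsto (fun x : ℝ => Real.log (θ x) / Real.log x) atTop (nhds θinf)) :
    limsup (fun x : ℝ =>
        Real.log (ℙ {ω | ∑ k, w k * g k ω < θ x}).toReal / Real.log x) atTop
      ≤ (n : ℝ) * θinf := by
  rcases eq_or_ne n 0 with hn | hn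
  · subst hn
    have hev : ∀ᶠ x : ℝ in atTop,
        Real.log (ℙ {ω | ∑ k : Fin 0, w k * g k ω < θ x}).toReal / Real.log x
          = 0 := by
      filter_upwards [eventually_gt_atTop (0:ℝ)] with x hx
      have hset : {ω : Ω | ∑ k : Fin 0, w k * g k ω < θ x} = Set.univ := by
        ext ω; simp [hθpos x hx]
      rw [hset]
      simp
    have hls : limsup (fun x : ℝ =>
        Real.log (ℙ {ω | ∑ k : Fin 0, w k * g k ω < θ x}).toReal / Real.log x)
        atTop = limsup (fun _ : ℝ => (0:ℝ)) atTop := limsup_congr hev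
    rw [hls, limsup_const]
    simp
  -- main case : n ≠ 0
  have hn0 : 0 < n := Nat.pos_of_ne_zero hn
  have hncast : (0:ℝ) < (n:ℝ) := by exact_mod_cast hn0
  haveI : Nonempty (Fin n) := ⟨⟨0, hn0⟩⟩
  set f : ℝ → ℝ := fun x =>
    Real.log (ℙ {ω | ∑ k, w k * g k ω < θ x}).toReal / Real.log x with hf
  set C₁ : ℝ := ∑ k, Real.log (w k) with hC₁
  set C₂ : ℝ := ∑ k, Real.log (2 * Real.exp 1 * ((n:ℝ) * w k)) with hC₂
  set hi : ℝ → ℝ := fun x => ((n:ℝ) * Real.log (θ x) - C₁) / Real.log x with hhi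
  set lo : ℝ → ℝ := fun x => ((n:ℝ) * Real.log (θ x) - C₂) / Real.log x with hlo
  -- a.s. positivity of all the g k
  have hpos : ∀ᵐ ω ∂(ℙ : Measure Ω), ∀ k, 0 < g k ω := by
    rw [ae_all_iff]
    intro k
    rw [ae_iff]
    have hms : MeasurableSet {ω | (0:ℝ) < g k ω} := (hmeas k) measurableSet_Ioi
    have h1 : ℙ {ω | (0:ℝ) < g k ω} = 1 := by
      have := hexp k 0 le_rfl
      simpa [Real.exp_zero] using this
    have hcompl : {ω | ¬ (0:ℝ) < g k ω} = {ω | (0:ℝ) < g k ω}ᶜ := rfl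
    rw [hcompl, measure_compl hms (measure_ne_top _ _), h1, measure_univ,
      tsub_self]
  -- tendsto of the bounding functions
  have htends : ∀ C : ℝ, Tendsto (fun x => ((n:ℝ) * Real.log (θ x) - C) / Real.log x)
      atTop (nhds ((n:ℝ) * θinf)) := by
    intro C
    have h1 : Tendsto (fun x => (n:ℝ) * (Real.log (θ x) / Real.log x)) atTop
        (nhds ((n:ℝ) * θinf)) := hθexp.const_mul _
    have h2 : Tendsto (fun x : ℝ => C / Real.log x) atTop (nhds 0) :=
      tendsto_const_nhds.div_atTop Real.tendsto_log_atTop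
    have h3 := h1.sub h2
    rw [sub_zero] at h3
    refine h3.congr fun x => by ring
  -- eventual smallness of θ
  have hsmall : ∀ᶠ x : ℝ in atTop, ∀ k, θ x ≤ 2 * ((n:ℝ) * w k) := by
    rw [eventually_all]
    intro k
    exact (hθ0.eventually_lt_const
        (mul_pos two_pos (mul_pos hncast (hw k)))).mono
      fun x hx => hx.le
  -- main eventual bound
  have hboth : ∀ᶠ x : ℝ in atTop, lo x ≤ f x ∧ f x ≤ hi x := by
    filter_upwards [eventually_gt_atTop (1:ℝ), hsmall] with x hx hsm
    have hx0 : (0:ℝ) < x := lt_trans one_pos hx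
    have hθx : 0 < θ x := hθpos x hx0
    have hlogx : 0 < Real.log x := Real.log_pos hx
    have hnw : ∀ k : Fin n, (0:ℝ) < (n:ℝ) * w k := fun k => mul_pos hncast (hw k)
    have hden : ∀ k : Fin n, (0:ℝ) < 2 * Real.exp 1 * ((n:ℝ) * w k) :=
      fun k => mul_pos (by positivity) (hnw k)
    set S : Set Ω := {ω | ∑ k, w k * g k ω < θ x} with hS
    -- upper bound on the measure
    have hmono_u : ℙ S ≤ ℙ (⋂ k, {ω | g k ω < θ x / w k}) := by
      refine measure_mono_ae (hpos.mono fun ω hω hs => ?_)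
      have hs' : ∑ j, w j * g j ω < θ x := hs
      refine Set.mem_iInter.2 fun k => ?_
      show g k ω < θ x / w k
      have h1 : w k * g k ω ≤ ∑ j, w j * g j ω :=
        Finset.single_le_sum (fun j _ => mul_nonneg (hw j).le (hω j).le)
          (Finset.mem_univ k)
      rw [lt_div_iff₀ (hw k), mul_comm]
      exact lt_of_le_of_lt h1 hs'
    have hprod_u : ℙ (⋂ k, {ω | g k ω < θ x / w k})
        = ∏ k, ℙ {ω | g k ω < θ x / w k} :=
      hindep.meas_iInter fun k => ⟨Set.Iio _, measurableSet_Iio, rfl⟩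
    have hfac_le : ∀ (k : Fin n) (c : ℝ), 0 ≤ c →
        (ℙ {ω | g k ω < c}).toReal ≤ c := by
      intro k c hc
      have hsub : {ω | g k ω < c} ⊆ {ω | g k ω ≤ c} :=
        Set.setOf_subset_setOf.2 fun ω h => le_of_lt h
      have h1 : (ℙ {ω | g k ω < c}).toReal ≤ (ℙ {ω | g k ω ≤ c}).toReal :=
        ENNReal.toReal_mono (measure_ne_top _ _) (measure_mono hsub)
      rw [unitExp_cdf_toReal (hmeas k) (hexp k) hc] at h1
      nlinarith [Real.add_one_le_exp (-c)]
    have hupperP : (ℙ S).toReal ≤ ∏ k, (θ x / w k) := by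
      have h1 : (ℙ S).toReal ≤ (∏ k, ℙ {ω | g k ω < θ x / w k}).toReal :=
        ENNReal.toReal_mono
          (by
            refine (ENNReal.prod_lt_top fun k _ => ?_).ne
            exact measure_lt_top _ _)
          (hmono_u.trans_eq hprod_u)
      rw [ENNReal.toReal_prod] at h1
      refine h1.trans (Finset.prod_le_prod (fun k _ => ENNReal.toReal_nonneg)
        fun k _ => hfac_le k _ (div_nonneg hθx.le (hw k).le))
    -- lower bound on the measure
    have hsub_l : (⋂ k, {ω | g k ω < θ x / ((n:ℝ) * w k)}) ⊆ S := by
      intro ω hω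
      simp only [Set.mem_iInter, Set.mem_setOf_eq] at *
      have hne : (Finset.univ : Finset (Fin n)).Nonempty := Finset.univ_nonempty
      calc ∑ k, w k * g k ω < ∑ _k : Fin n, θ x / (n:ℝ) := by
            refine Finset.sum_lt_sum_of_nonempty hne fun k _ => ?_
            have h1 := mul_lt_mul_of_pos_left (hω k) (hw k)
            have heq : w k * (θ x / ((n:ℝ) * w k)) = θ x / (n:ℝ) := by
              field_simp [(hnw k).ne', hncast.ne', (hw k).ne']
            linarith
        _ = θ x := by
            rw [Finset.sum_const, Finset.card_univ, Fintype.card_fin,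
              nsmul_eq_mul, mul_comm, div_mul_cancel₀ _ hncast.ne']
    have hprod_l : ℙ (⋂ k, {ω | g k ω < θ x / ((n:ℝ) * w k)})
        = ∏ k, ℙ {ω | g k ω < θ x / ((n:ℝ) * w k)} :=
      hindep.meas_iInter fun k => ⟨Set.Iio _, measurableSet_Iio, rfl⟩
    have hfac_ge : ∀ k : Fin n,
        θ x / (2 * Real.exp 1 * ((n:ℝ) * w k))
          ≤ (ℙ {ω | g k ω < θ x / ((n:ℝ) * w k)}).toReal := by
      intro k
      set c : ℝ := θ x / ((n:ℝ) * w k) with hc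
      have hcpos : 0 < c := div_pos hθx (hnw k)
      have hc2 : c ≤ 2 := by
        rw [hc, div_le_iff₀ (hnw k)]
        linarith [hsm k]
      have hsub : {ω | g k ω ≤ c / 2} ⊆ {ω | g k ω < c} :=
        Set.setOf_subset_setOf.2 fun ω h => lt_of_le_of_lt h (by linarith)
      have h1 : (ℙ {ω | g k ω ≤ c / 2}).toReal
          ≤ (ℙ {ω | g k ω < c}).toReal :=
        ENNReal.toReal_mono (measure_ne_top _ _) (measure_mono hsub)
      rw [unitExp_cdf_toReal (hmeas k) (hexp k) (by linarith)] at h1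
      have h2 : c / 2 / Real.exp 1 ≤ 1 - Real.exp (-(c / 2)) :=
        aux_exp_lb (c / 2) (by linarith) (by linarith)
      have heq : θ x / (2 * Real.exp 1 * ((n:ℝ) * w k)) = c / 2 / Real.exp 1 := by
        rw [hc]
        field_simp [(hnw k).ne', hncast.ne', (hw k).ne']
      rw [heq]
      linarith
    have hlowerP : ∏ k, (θ x / (2 * Real.exp 1 * ((n:ℝ) * w k))) ≤ (ℙ S).toReal := by
      have h1 : (∏ k, ℙ {ω | g k ω < θ x / ((n:ℝ) * w k)}).toReal ≤ (ℙ S).toReal :=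
        ENNReal.toReal_mono (measure_ne_top _ _)
          (hprod_l.symm.trans_le (measure_mono hsub_l))
      rw [ENNReal.toReal_prod] at h1
      refine le_trans (Finset.prod_le_prod
        (fun k _ => (div_pos hθx (hden k)).le) fun k _ => hfac_ge k) h1
    -- positivity of the probability
    have hLpos : (0:ℝ) < ∏ k, (θ x / (2 * Real.exp 1 * ((n:ℝ) * w k))) :=
      Finset.prod_pos fun k _ => div_pos hθx (hden k)
    have hPpos : (0:ℝ) < (ℙ S).toReal := lt_of_lt_of_le hLpos hlowerP
    -- logarithm bounds
    have hlogU : Real.log (ℙ S).toReal ≤ (n:ℝ) * Real.log (θ x) - C₁ := by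
      have h1 : Real.log (ℙ S).toReal ≤ Real.log (∏ k, (θ x / w k)) :=
        Real.log_le_log hPpos hupperP
      rw [Real.log_prod (fun k _ => (div_pos hθx (hw k)).ne')] at h1
      have h2 : ∑ k, Real.log (θ x / w k) = (n:ℝ) * Real.log (θ x) - C₁ := by
        rw [hC₁]
        rw [Finset.sum_congr rfl fun k _ =>
          Real.log_div hθx.ne' (hw k).ne']
        rw [Finset.sum_sub_distrib, Finset.sum_const, Finset.card_univ,
          Fintype.card_fin, nsmul_eq_mul]
      linarith
    have hlogL : (n:ℝ) * Real.log (θ x) - C₂ ≤ Real.log (ℙ S).toReal := by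
      have h1 : Real.log (∏ k, (θ x / (2 * Real.exp 1 * ((n:ℝ) * w k))))
          ≤ Real.log (ℙ S).toReal := Real.log_le_log hLpos hlowerP
      rw [Real.log_prod (fun k _ => (div_pos hθx (hden k)).ne')] at h1
      have h2 : ∑ k, Real.log (θ x / (2 * Real.exp 1 * ((n:ℝ) * w k)))
          = (n:ℝ) * Real.log (θ x) - C₂ := by
        rw [hC₂]
        rw [Finset.sum_congr rfl fun k _ =>
          Real.log_div hθx.ne' (hden k).ne']
        rw [Finset.sum_sub_distrib, Finset.sum_const, Finset.card_univ,
          Fintype.card_fin, nsmul_eq_mul]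
      linarith
    constructor
    · exact (div_le_div_iff_of_pos_right hlogx).2 hlogL
    · exact (div_le_div_iff_of_pos_right hlogx).2 hlogU
  have hftends : Tendsto f atTop (nhds ((n:ℝ) * θinf)) :=
    tendsto_of_tendsto_of_tendsto_of_le_of_le' (htends C₂) (htends C₁)
      (hboth.mono fun x h => h.1) (hboth.mono fun x h => h.2)
  exact hftends.limsup_eq.le
end

section
/- For k = 1, …, n let G_k and H_k be unit-rate exponential random variables, all 2n of them mutually independent, and let c_k, d_k > 0. Then for every θ > 0, P[max_{1≤k≤n} (c_k/G_k + d_k/H_k)^{-1} < θ] ≤ (2θ)^n · ∏_{k=1}^n (c_k + d_k). -/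
open MeasureTheory ProbabilityTheory

/-- for mutually independent unit-rate exponentials `G_k, H_k`
(`k = 1, …, n`) and `c_k, d_k > 0`, for every `θ > 0`,
`P[max_k (c_k/G_k + d_k/H_k)⁻¹ < θ] ≤ (2θ)^n ∏_k (c_k + d_k)`. -/
theorem max_harmonic_metric_lower_tail
    {Ω : Type*} [MeasureSpace Ω] [IsProbabilityMeasure (ℙ : Measure Ω)]
    (n : ℕ) (hn : 1 ≤ n) (G H : Fin n → Ω → ℝ) (c d : Fin n → ℝ)
    (hGmeas : ∀ k, Measurable (G k)) (hHmeas : ∀ k, Measurable (H k))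
    (hindep : iIndepFun (Sum.elim G H) ℙ)
    (hGexp : ∀ k, IsUnitExp (G k)) (hHexp : ∀ k, IsUnitExp (H k))
    (hc : ∀ k, 0 < c k) (hd : ∀ k, 0 < d k)
    (θ : ℝ) (hθ : 0 < θ) :
    ℙ {ω | Finset.univ.sup' ⟨⟨0, hn⟩, Finset.mem_univ _⟩
            (fun k => (c k / G k ω + d k / H k ω)⁻¹) < θ}
      ≤ ENNReal.ofReal ((2 * θ) ^ n * ∏ k, (c k + d k)) := by
  classical
  set a : Fin n → ℝ := fun k => 2 * θ * c k with ha
  set b : Fin n → ℝ := fun k => 2 * θ * d k with hb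
  have hapos : ∀ k, 0 < a k := fun k => by have := hc k; positivity
  have hbpos : ∀ k, 0 < b k := fun k => by have := hd k; positivity
  set B : Fin n → Set Ω := fun k => {ω | G k ω < a k} ∪ {ω | H k ω < b k} with hB
  -- Step 1: the event is contained in ⋂ k, B k
  have hsub : {ω | Finset.univ.sup' ⟨⟨0, hn⟩, Finset.mem_univ _⟩
      (fun k => (c k / G k ω + d k / H k ω)⁻¹) < θ} ⊆ ⋂ k, B k := by
    intro ω hω
    rw [Set.mem_setOf_eq] at hω
    replace hω := (Finset.sup'_lt_iff _).1 hω
    refine Set.mem_iInter.2 fun k => ?_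
    by_contra hk
    simp only [hB, Set.mem_union, Set.mem_setOf_eq, not_or, not_lt] at hk
    obtain ⟨h1, h2⟩ := hk
    have hG : 0 < G k ω := lt_of_lt_of_le (hapos k) h1
    have hH : 0 < H k ω := lt_of_lt_of_le (hbpos k) h2
    have h1' : 2 * θ * c k ≤ G k ω := h1
    have h2' : 2 * θ * d k ≤ H k ω := h2
    have hs1 : c k / G k ω ≤ 1 / (2 * θ) := by
      rw [div_le_div_iff₀ hG (by positivity)]
      nlinarith [h1']
    have hs2 : d k / H k ω ≤ 1 / (2 * θ) := by
      rw [div_le_div_iff₀ hH (by positivity)]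
      nlinarith [h2']
    have hspos : 0 < c k / G k ω + d k / H k ω := by
      have := hc k; have := hd k; positivity
    have hsle : c k / G k ω + d k / H k ω ≤ θ⁻¹ := by
      have : 1 / (2 * θ) + 1 / (2 * θ) = θ⁻¹ := by
        rw [← add_div, inv_eq_one_div, div_eq_div_iff (by positivity) hθ.ne']
        ring
      linarith
    have hinv : θ ≤ (c k / G k ω + d k / H k ω)⁻¹ := by
      have := inv_anti₀ hspos hsle
      rwa [inv_inv] at this
    exact absurd (hω k (Finset.mem_univ k)) (not_lt.2 hinv)
  -- Step 2: tail bound for each B k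
  have tail : ∀ (g : Ω → ℝ), Measurable g → IsUnitExp g → ∀ x : ℝ, 0 < x →
      ℙ {ω | g ω < x} ≤ ENNReal.ofReal x := by
    intro g hg hge x hx
    have h1 : {ω | g ω < x} ⊆ {ω | x < g ω}ᶜ := by
      intro ω hω'
      simp only [Set.mem_compl_iff, Set.mem_setOf_eq, not_lt]
      exact le_of_lt hω'
    have hms : MeasurableSet {ω | x < g ω} := hg measurableSet_Ioi
    calc ℙ {ω | g ω < x} ≤ ℙ {ω | x < g ω}ᶜ := measure_mono h1
      _ = 1 - ℙ {ω | x < g ω} := prob_compl_eq_one_sub hms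
      _ = 1 - ENNReal.ofReal (Real.exp (-x)) := by rw [hge x hx.le]
      _ = ENNReal.ofReal (1 - Real.exp (-x)) := by
          rw [ENNReal.ofReal_sub _ (Real.exp_nonneg _), ENNReal.ofReal_one]
      _ ≤ ENNReal.ofReal x := by
          apply ENNReal.ofReal_le_ofReal
          have := Real.add_one_le_exp (-x)
          linarith
  have hBle : ∀ k, ℙ (B k) ≤ ENNReal.ofReal (a k + b k) := by
    intro k
    calc ℙ (B k) ≤ ℙ {ω | G k ω < a k} + ℙ {ω | H k ω < b k} := measure_union_le _ _
      _ ≤ ENNReal.ofReal (a k) + ENNReal.ofReal (b k) :=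
          add_le_add (tail _ (hGmeas k) (hGexp k) _ (hapos k))
            (tail _ (hHmeas k) (hHexp k) _ (hbpos k))
      _ = ENNReal.ofReal (a k + b k) := (ENNReal.ofReal_add (hapos k).le (hbpos k).le).symm
  -- Step 3: independence of the B k
  set m : Fin n ⊕ Fin n → MeasurableSpace Ω :=
    fun i => MeasurableSpace.comap (Sum.elim G H i) inferInstance with hm
  have hle : ∀ i, m i ≤ (inferInstance : MeasurableSpace Ω) := by
    intro i
    cases i with
    | inl k => exact (hGmeas k).comap_le
    | inr k => exact (hHmeas k).comap_le
  have hiI : iIndep m ℙ := hindep.iIndep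
  have hmemG : ∀ (T : Set (Fin n ⊕ Fin n)) k, Sum.inl k ∈ T → Sum.inr k ∈ T →
      MeasurableSet[⨆ i ∈ T, m i] (B k) := by
    intro T k h1 h2
    apply MeasurableSet.union
    · exact (le_biSup m h1) _ ⟨Set.Iio (a k), measurableSet_Iio, rfl⟩
    · exact (le_biSup m h2) _ ⟨Set.Iio (b k), measurableSet_Iio, rfl⟩
  have key : ∀ S : Finset (Fin n), ℙ (⋂ k ∈ S, B k) = ∏ k ∈ S, ℙ (B k) := by
    intro S
    induction S using Finset.induction_on with
    | empty => simp
    | @insert a' S' ha' ih =>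
      set T1 : Set (Fin n ⊕ Fin n) := {Sum.inl a', Sum.inr a'} with hT1
      set T2 : Set (Fin n ⊕ Fin n) :=
        {i | ∃ k ∈ S', i = Sum.inl k ∨ i = Sum.inr k} with hT2
      have hdisj : Disjoint T1 T2 := by
        rw [Set.disjoint_left]
        rintro i hi ⟨k, hk, rfl | rfl⟩ <;>
          simp only [hT1, Set.mem_insert_iff, Set.mem_singleton_iff] at hi <;>
          rcases hi with hi | hi <;> simp_all
      have hind2 : Indep (⨆ i ∈ T1, m i) (⨆ i ∈ T2, m i) ℙ :=
        indep_iSup_of_disjoint hle hiI hdisj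
      have hB1 : MeasurableSet[⨆ i ∈ T1, m i] (B a') :=
        hmemG T1 a' (by simp [hT1]) (by simp [hT1])
      have hB2 : MeasurableSet[⨆ i ∈ T2, m i] (⋂ k ∈ S', B k) := by
        refine Finset.measurableSet_biInter _ fun k hk => ?_
        exact hmemG T2 k ⟨k, hk, Or.inl rfl⟩ ⟨k, hk, Or.inr rfl⟩
      rw [Finset.set_biInter_insert, Finset.prod_insert ha',
        (Indep_iff _ _ _).1 hind2 _ _ hB1 hB2, ih]
  -- Step 4: assemble
  have hunion : (⋂ k, B k) = ⋂ k ∈ Finset.univ, B k := by simp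
  calc ℙ {ω | Finset.univ.sup' ⟨⟨0, hn⟩, Finset.mem_univ _⟩
            (fun k => (c k / G k ω + d k / H k ω)⁻¹) < θ}
      ≤ ℙ (⋂ k, B k) := measure_mono hsub
    _ = ∏ k, ℙ (B k) := by rw [hunion, key]
    _ ≤ ∏ k, ENNReal.ofReal (a k + b k) := Finset.prod_le_prod' fun k _ => hBle k
    _ = ENNReal.ofReal (∏ k, (a k + b k)) :=
        (ENNReal.ofReal_prod_of_nonneg fun k _ => by
          have := hapos k; have := hbpos k; linarith).symm
    _ = ENNReal.ofReal ((2 * θ) ^ n * ∏ k, (c k + d k)) := by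
        congr 1
        have heq : ∀ k : Fin n, a k + b k = (2 * θ) * (c k + d k) := fun k => by
          simp only [ha, hb]; ring
        simp_rw [heq]
        rw [Finset.prod_mul_distrib, Finset.prod_const, Finset.card_univ, Fintype.card_fin]
end

section
/- For k = 1, …, n let G_k and H_k be unit-rate exponential random variables, all 2n of them mutually independent, and let a_k, b_k > 0. Then for every θ > 0, P[min(∑_{k=1}^n a_k G_k, ∑_{k=1}^n b_k H_k) < θ] ≤ θ^n · (∏_{k=1}^n a_k^{-1} + ∏_{k=1}^n b_k^{-1}). -/
open MeasureTheory ProbabilityTheory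

lemma hop_bound {Ω : Type*} [MeasureSpace Ω] [IsProbabilityMeasure (ℙ : Measure Ω)]
    (n : ℕ) (G : Fin n → Ω → ℝ) (a : Fin n → ℝ)
    (hGmeas : ∀ k, Measurable (G k))
    (hGexp : ∀ k, IsUnitExp (G k)) (ha : ∀ k, 0 < a k)
    (θ : ℝ) (hθ : 0 < θ)
    (hprod : ℙ (⋂ k, {ω | G k ω < θ / a k}) = ∏ k, ℙ {ω | G k ω < θ / a k}) :
    ℙ {ω | ∑ k, a k * G k ω < θ} ≤ ENNReal.ofReal (θ ^ n * ∏ k, (a k)⁻¹) := by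
  have hnull : ℙ (⋃ k, {ω | G k ω ≤ 0}) = 0 := by
    refine measure_iUnion_null fun k => ?_
    have h1 : ℙ {ω | (0:ℝ) < G k ω} = 1 := by
      simpa using hGexp k 0 le_rfl
    have hc : {ω | G k ω ≤ 0} = {ω | (0:ℝ) < G k ω}ᶜ := by ext ω; simp [not_lt]
    have hm : MeasurableSet {ω | (0:ℝ) < G k ω} := measurableSet_lt measurable_const (hGmeas k)
    rw [hc, measure_compl hm (measure_ne_top _ _), h1]
    simp
  have hsub : {ω | ∑ k, a k * G k ω < θ}
      ⊆ (⋂ k, {ω | G k ω < θ / a k}) ∪ ⋃ k, {ω | G k ω ≤ 0} := by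
    intro ω hω
    by_cases hpos : ∀ k, 0 < G k ω
    · left
      refine Set.mem_iInter.2 fun k => ?_
      have hle : a k * G k ω ≤ ∑ j, a j * G j ω :=
        Finset.single_le_sum (fun j _ => (mul_nonneg (ha j).le (hpos j).le)) (Finset.mem_univ k)
      have : a k * G k ω < θ := lt_of_le_of_lt hle hω
      exact (lt_div_iff₀' (ha k)).2 this
    · right
      push_neg at hpos
      obtain ⟨k, hk⟩ := hpos
      exact Set.mem_iUnion.2 ⟨k, hk⟩
  calc ℙ {ω | ∑ k, a k * G k ω < θ}
      ≤ ℙ ((⋂ k, {ω | G k ω < θ / a k}) ∪ ⋃ k, {ω | G k ω ≤ 0}) := measure_mono hsub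
    _ ≤ ℙ (⋂ k, {ω | G k ω < θ / a k}) + ℙ (⋃ k, {ω | G k ω ≤ 0}) := measure_union_le _ _
    _ = ∏ k, ℙ {ω | G k ω < θ / a k} := by rw [hnull, hprod, add_zero]
    _ ≤ ∏ k, ENNReal.ofReal (θ / a k) := by
        refine Finset.prod_le_prod' fun k _ => ?_
        have hc : (0:ℝ) ≤ θ / a k := (div_pos hθ (ha k)).le
        have hsub2 : {ω | G k ω < θ / a k} ⊆ {ω | θ / a k < G k ω}ᶜ := by
          intro ω hω; simp only [Set.mem_compl_iff, Set.mem_setOf_eq, not_lt] at *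
          exact hω.le
        have hm : MeasurableSet {ω | θ / a k < G k ω} :=
          measurableSet_lt measurable_const (hGmeas k)
        calc ℙ {ω | G k ω < θ / a k} ≤ ℙ ({ω | θ / a k < G k ω}ᶜ) := measure_mono hsub2
          _ = 1 - ENNReal.ofReal (Real.exp (-(θ / a k))) := by
              rw [measure_compl hm (measure_ne_top _ _), hGexp k _ hc, measure_univ]
          _ ≤ ENNReal.ofReal (θ / a k) := by
              refine tsub_le_iff_right.2 ?_
              rw [← ENNReal.ofReal_add hc (Real.exp_nonneg _), ← ENNReal.ofReal_one]
              refine ENNReal.ofReal_le_ofReal ?_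
              have := Real.add_one_le_exp (-(θ / a k))
              linarith
    _ = ENNReal.ofReal (θ ^ n * ∏ k, (a k)⁻¹) := by
        rw [← ENNReal.ofReal_prod_of_nonneg (fun k _ => (div_pos hθ (ha k)).le)]
        congr 1
        simp_rw [div_eq_mul_inv]
        rw [Finset.prod_mul_distrib, Finset.prod_const, Finset.card_univ, Fintype.card_fin]

/-- for mutually independent unit-rate exponentials `G_k, H_k`
(`k = 1, …, n`) and `a_k, b_k > 0`, for every `θ > 0`,
`P[min(∑_k a_k G_k, ∑_k b_k H_k) < θ] ≤ θ^n (∏_k a_k⁻¹ + ∏_k b_k⁻¹)`. -/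
theorem min_simo_miso_lower_tail
    {Ω : Type*} [MeasureSpace Ω] [IsProbabilityMeasure (ℙ : Measure Ω)]
    (n : ℕ) (G H : Fin n → Ω → ℝ) (a b : Fin n → ℝ)
    (hGmeas : ∀ k, Measurable (G k)) (hHmeas : ∀ k, Measurable (H k))
    (hindep : iIndepFun (Sum.elim G H) ℙ)
    (hGexp : ∀ k, IsUnitExp (G k)) (hHexp : ∀ k, IsUnitExp (H k))
    (ha : ∀ k, 0 < a k) (hb : ∀ k, 0 < b k)
    (θ : ℝ) (hθ : 0 < θ) :
    ℙ {ω | min (∑ k, a k * G k ω) (∑ k, b k * H k ω) < θ}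
      ≤ ENNReal.ofReal (θ ^ n * ((∏ k, (a k)⁻¹) + ∏ k, (b k)⁻¹)) := by
  set s : Fin n ⊕ Fin n → Set Ω :=
    Sum.elim (fun k => {ω | G k ω < θ / a k}) (fun k => {ω | H k ω < θ / b k}) with hs
  have hmeas : ∀ i, MeasurableSet[(inferInstance : MeasurableSpace ℝ).comap
      (Sum.elim G H i)] (s i) := by
    rintro (k | k)
    · exact ⟨Set.Iio (θ / a k), measurableSet_Iio, rfl⟩
    · exact ⟨Set.Iio (θ / b k), measurableSet_Iio, rfl⟩
  have hprodG : ℙ (⋂ k, {ω | G k ω < θ / a k}) = ∏ k, ℙ {ω | G k ω < θ / a k} := by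
    have h := hindep.meas_biInter
      (S := Finset.univ.map ⟨Sum.inl, Sum.inl_injective⟩) (s := s)
      (fun i _ => hmeas i)
    rw [Finset.prod_map] at h
    convert h using 2
    ext ω
    simp [hs]
    rfl
  have hprodH : ℙ (⋂ k, {ω | H k ω < θ / b k}) = ∏ k, ℙ {ω | H k ω < θ / b k} := by
    have h := hindep.meas_biInter
      (S := Finset.univ.map ⟨Sum.inr, Sum.inr_injective⟩) (s := s)
      (fun i _ => hmeas i)
    rw [Finset.prod_map] at h
    convert h using 2
    ext ω
    simp [hs]
    rfl
  have hG := hop_bound n G a hGmeas hGexp ha θ hθ hprodG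
  have hH := hop_bound n H b hHmeas hHexp hb θ hθ hprodH
  have hsub : {ω | min (∑ k, a k * G k ω) (∑ k, b k * H k ω) < θ}
      ⊆ {ω | ∑ k, a k * G k ω < θ} ∪ {ω | ∑ k, b k * H k ω < θ} := by
    intro ω hω
    simp only [Set.mem_setOf_eq, inf_lt_iff] at hω
    rcases hω with h | h
    · exact Or.inl h
    · exact Or.inr h
  calc ℙ {ω | min (∑ k, a k * G k ω) (∑ k, b k * H k ω) < θ}
      ≤ ℙ ({ω | ∑ k, a k * G k ω < θ} ∪ {ω | ∑ k, b k * H k ω < θ}) := measure_mono hsub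
    _ ≤ ℙ {ω | ∑ k, a k * G k ω < θ} + ℙ {ω | ∑ k, b k * H k ω < θ} := measure_union_le _ _
    _ ≤ ENNReal.ofReal (θ ^ n * ∏ k, (a k)⁻¹) + ENNReal.ofReal (θ ^ n * ∏ k, (b k)⁻¹) :=
        add_le_add hG hH
    _ = ENNReal.ofReal (θ ^ n * ((∏ k, (a k)⁻¹) + ∏ k, (b k)⁻¹)) := by
        rw [← ENNReal.ofReal_add (mul_nonneg (pow_nonneg hθ.le n) (Finset.prod_nonneg fun k _ => inv_nonneg.2 (ha k).le)) (mul_nonneg (pow_nonneg hθ.le n) (Finset.prod_nonneg fun k _ => inv_nonneg.2 (hb k).le)), mul_add]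
end

section
/- Fix n ≥ 1 relays with path gains a_k > 0 (source A to relay k) and b_k > 0 (relay k to source B), and let G_1, …, G_n, H_1, …, H_n be mutually independent unit-rate exponential fading powers. Let K* be the (almost surely unique) index maximizing (1/(a_k G_k) + 1/(b_k H_k))^{-1} over k = 1, …, n. Let τ_f, τ_b ∈ (0,1) with τ_f + τ_b = 1, let μ > 0, and let 0 < m < (1/2)·min{(1+μ)τ_f, (1+1/μ)τ_b}. For γ > 1 define I_1(γ) = log(1 + γ a_{K*} G_{K*}), I_2(γ) = log(1 + γ b_{K*} H_{K*}), and ε(γ) = P[ {(τ_f/2)·min(I_1, I_2) < (m/(1+μ)) log γ} ∪ {(τ_b/2)·min(I_1, I_2) < (m/(1+1/μ)) log γ} ]. Then limsup_{γ→∞} log ε(γ)/log γ ≤ −n·(1 − 2m / min{(1+μ)τ_f, (1+1/μ)τ_b}); that is, TDMH routed through the single optimally selected relay achieves the same diversity-multiplexing tradeoff as TDMH with full relay collaboration. -/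
open MeasureTheory ProbabilityTheory Filter

section Aux
variable {Ω : Type*} [MeasureSpace Ω] [IsProbabilityMeasure (ℙ : Measure Ω)]
  {g : Ω → ℝ}

lemma unitExp_le_zero (hg : Measurable g) (he : IsUnitExp g) :
    ℙ {ω | g ω ≤ 0} = 0 := by
  have h1 : {ω | g ω ≤ 0} = {ω | (0:ℝ) < g ω}ᶜ := by
    ext ω; simp [not_lt]
  have hm : MeasurableSet {ω | (0:ℝ) < g ω} := hg measurableSet_Ioi
  rw [h1, prob_compl_eq_one_sub hm, he 0 le_rfl]
  simp

lemma unitExp_Iic_le (hg : Measurable g) (he : IsUnitExp g) {x : ℝ} (hx : 0 ≤ x) :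
    ℙ {ω | g ω ≤ x} ≤ ENNReal.ofReal x := by
  have h1 : {ω | g ω ≤ x} = {ω | x < g ω}ᶜ := by
    ext ω; simp [not_lt]
  have hm : MeasurableSet {ω | x < g ω} := hg measurableSet_Ioi
  rw [h1, prob_compl_eq_one_sub hm, he x hx]
  rw [tsub_le_iff_right, ← ENNReal.ofReal_add hx (Real.exp_nonneg _)]
  rw [show (1:ENNReal) = ENNReal.ofReal 1 by simp]
  apply ENNReal.ofReal_le_ofReal
  nlinarith [Real.add_one_le_exp (-x)]

lemma unitExp_Ioo_ge (hg : Measurable g) (he : IsUnitExp g) {δ : ℝ} (hδ : 0 < δ) :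
    ENNReal.ofReal (1 - Real.exp (-(δ/2))) ≤ ℙ {ω | g ω ∈ Set.Ioo 0 δ} := by
  have hsub : {ω | g ω ∈ Set.Ioo 0 δ}ᶜ ⊆ {ω | g ω ≤ 0} ∪ {ω | δ/2 < g ω} := by
    intro ω hω
    simp only [Set.mem_compl_iff, Set.mem_setOf_eq, Set.mem_Ioo, not_and_or, not_lt] at hω
    rcases hω with h | h
    · exact Or.inl h
    · exact Or.inr (by simp only [Set.mem_setOf_eq]; linarith)
  have hm : MeasurableSet {ω | g ω ∈ Set.Ioo 0 δ} := hg measurableSet_Ioo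
  have hc : ℙ {ω | g ω ∈ Set.Ioo 0 δ}ᶜ ≤ ENNReal.ofReal (Real.exp (-(δ/2))) := by
    calc ℙ {ω | g ω ∈ Set.Ioo 0 δ}ᶜ ≤ ℙ ({ω | g ω ≤ 0} ∪ {ω | δ/2 < g ω}) := measure_mono hsub
    _ ≤ ℙ {ω | g ω ≤ 0} + ℙ {ω | δ/2 < g ω} := measure_union_le _ _
    _ = ENNReal.ofReal (Real.exp (-(δ/2))) := by
        rw [unitExp_le_zero hg he, he (δ/2) (by linarith), zero_add]
  have h2 : ℙ {ω | g ω ∈ Set.Ioo 0 δ} = 1 - ℙ {ω | g ω ∈ Set.Ioo 0 δ}ᶜ := by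
    rw [prob_compl_eq_one_sub hm]
    rw [ENNReal.sub_sub_cancel ENNReal.one_ne_top prob_le_one]
  rw [h2, ENNReal.ofReal_sub _ (Real.exp_nonneg _), ENNReal.ofReal_one]
  exact tsub_le_tsub le_rfl hc

lemma harm_le_min {x y : ℝ} (hx : 0 < x) (hy : 0 < y) :
    (1/x + 1/y)⁻¹ ≤ min x y := by
  have h1x : (0:ℝ) < 1/x := by positivity
  have h1y : (0:ℝ) < 1/y := by positivity
  refine le_min ?_ ?_
  · rw [inv_le_comm₀ (by positivity) hx, inv_eq_one_div]; linarith
  · rw [inv_le_comm₀ (by positivity) hy, inv_eq_one_div]; linarith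

lemma min_le_two_harm {x y : ℝ} (hx : 0 < x) (hy : 0 < y) :
    min x y ≤ 2 * (1/x + 1/y)⁻¹ := by
  have hmin : 0 < min x y := lt_min hx hy
  have hs : (0:ℝ) < 1/x + 1/y := by positivity
  have h1 : 1/x ≤ (min x y)⁻¹ := by
    rw [one_div]; exact inv_anti₀ hmin (min_le_left x y)
  have h2 : 1/y ≤ (min x y)⁻¹ := by
    rw [one_div]; exact inv_anti₀ hmin (min_le_right x y)
  have h3 : 1/x + 1/y ≤ 2 * (min x y)⁻¹ := by linarith
  have h4 : (2 * (min x y)⁻¹)⁻¹ ≤ (1/x + 1/y)⁻¹ := inv_anti₀ hs h3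
  have h5 : (2 * (min x y)⁻¹)⁻¹ = min x y / 2 := by field_simp
  linarith

lemma one_sub_exp_neg_ge {x : ℝ} (hx0 : 0 ≤ x) (hx1 : x ≤ 1) :
    x/2 ≤ 1 - Real.exp (-x) := by
  have h := Real.add_one_le_exp x
  have hp : (0:ℝ) < 1 + x := by linarith
  have hexp : Real.exp (-x) ≤ (1+x)⁻¹ := by
    rw [Real.exp_neg]
    exact inv_anti₀ hp (by linarith)
  have h2 : (1+x)⁻¹ ≤ 1 - x/2 := by
    rw [inv_eq_one_div, div_le_iff₀ hp]
    nlinarith [mul_nonneg hx0 (by linarith : (0:ℝ) ≤ 1 - x)]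
  linarith

lemma limsup_aux (E : ℝ → Set Ω) (n : ℕ) (r C1 Ca : ℝ)
    (hr0 : 0 < r) (hr1 : r < 1) (hC1 : 0 < C1) (hCa1 : 1 ≤ Ca)
    (hup : ∀ γ : ℝ, 1 < γ → ℙ (E γ) ≤ ENNReal.ofReal ((C1 * γ ^ (r-1))^n))
    (hlow : ∀ γ : ℝ, 1 < γ →
      ENNReal.ofReal ((1 - Real.exp (-((γ^r - 1)/(γ*Ca)/2)))^(2*n)) ≤ ℙ (E γ)) :
    limsup (fun γ : ℝ => Real.log (ℙ (E γ)).toReal / Real.log γ) atTop ≤ (n:ℝ)*(r-1) := by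
  have hCa0 : (0:ℝ) < Ca := by linarith
  set f := fun γ : ℝ => Real.log (ℙ (E γ)).toReal / Real.log γ with hfdef
  set g := fun γ : ℝ => (n:ℝ)*Real.log C1/Real.log γ + (n:ℝ)*(r-1) with hgdef
  have hδpos : ∀ γ:ℝ, 1 < γ → 0 < (γ^r - 1)/(γ*Ca) := by
    intro γ hγ
    have hγ0 : (0:ℝ) < γ := by linarith
    have h1 : 1 < γ^r := (Real.one_lt_rpow_iff_of_pos hγ0).mpr (Or.inl ⟨hγ, hr0⟩)
    exact div_pos (by linarith) (by positivity)
  have hεpos : ∀ γ:ℝ, 1 < γ → 0 < (ℙ (E γ)).toReal := by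
    intro γ hγ
    have hδ := hδpos γ hγ
    have hexp : Real.exp (-((γ^r - 1)/(γ*Ca)/2)) < 1 := by
      rw [Real.exp_lt_one_iff]; linarith
    have hlt : 0 < (1 - Real.exp (-((γ^r - 1)/(γ*Ca)/2)))^(2*n) :=
      pow_pos (by linarith) _
    have h2 : (1 - Real.exp (-((γ^r - 1)/(γ*Ca)/2)))^(2*n) ≤ (ℙ (E γ)).toReal :=
      (ENNReal.ofReal_le_iff_le_toReal (measure_ne_top _ _)).1 (hlow γ hγ)
    linarith
  have hub : ∀ᶠ γ in atTop, f γ ≤ g γ := by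
    filter_upwards [eventually_gt_atTop (1:ℝ)] with γ hγ
    have hγ0 : (0:ℝ) < γ := lt_trans one_pos hγ
    have hlogγ : 0 < Real.log γ := Real.log_pos hγ
    have hbase : 0 < C1 * γ^(r-1) := by positivity
    have h1 : (ℙ (E γ)).toReal ≤ (C1 * γ^(r-1))^n :=
      ENNReal.toReal_le_of_le_ofReal (by positivity) (hup γ hγ)
    have h2 : Real.log (ℙ (E γ)).toReal ≤ (n:ℝ)*Real.log C1 + (n:ℝ)*(r-1)*Real.log γ := by
      calc Real.log (ℙ (E γ)).toReal ≤ Real.log ((C1*γ^(r-1))^n) :=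
            Real.log_le_log (hεpos γ hγ) h1
      _ = n * Real.log (C1*γ^(r-1)) := by rw [Real.log_pow]
      _ = (n:ℝ)*Real.log C1 + (n:ℝ)*(r-1)*Real.log γ := by
          rw [Real.log_mul (ne_of_gt hC1) (by positivity), Real.log_rpow hγ0]; ring
    show Real.log (ℙ (E γ)).toReal / Real.log γ ≤ (n:ℝ)*Real.log C1/Real.log γ + (n:ℝ)*(r-1)
    calc Real.log (ℙ (E γ)).toReal / Real.log γ
        ≤ ((n:ℝ)*Real.log C1 + (n:ℝ)*(r-1)*Real.log γ)/Real.log γ := by gcongr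
      _ = (n:ℝ)*Real.log C1/Real.log γ + (n:ℝ)*(r-1) := by field_simp
  have hlb : ∀ᶠ γ in atTop, (2*n:ℝ)*(r-1) - (2*n:ℝ)*Real.log (8*Ca) ≤ f γ := by
    filter_upwards [eventually_ge_atTop (max ((2:ℝ)^(r⁻¹)) (Real.exp 1)),
        eventually_gt_atTop (1:ℝ)] with γ hγmax hγ1
    have hγ0 : (0:ℝ) < γ := by linarith
    have hγe : Real.exp 1 ≤ γ := le_trans (le_max_right _ _) hγmax
    have hlogγ1 : 1 ≤ Real.log γ := by
      rw [← Real.log_exp 1]; exact Real.log_le_log (Real.exp_pos 1) hγe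
    have hlogγ : 0 < Real.log γ := lt_of_lt_of_le one_pos hlogγ1
    have h2γ : (2:ℝ) ≤ γ^r := by
      have h1 : ((2:ℝ)^(r⁻¹))^r ≤ γ^r :=
        Real.rpow_le_rpow (by positivity) (le_trans (le_max_left _ _) hγmax) hr0.le
      rwa [← Real.rpow_mul (by norm_num), inv_mul_cancel₀ (ne_of_gt hr0),
        Real.rpow_one] at h1
    set δ := (γ^r - 1)/(γ*Ca) with hδdef
    have hδ0 : 0 < δ := hδpos γ hγ1
    have hδ1 : δ ≤ 1 := by
      rw [hδdef, div_le_one (by positivity)]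
      have hle : γ^r ≤ γ := by
        calc γ^r ≤ γ^(1:ℝ) := Real.rpow_le_rpow_of_exponent_le hγ1.le hr1.le
        _ = γ := Real.rpow_one γ
      nlinarith
    have hδlb : γ^(r-1)/(2*Ca) ≤ δ := by
      rw [hδdef, Real.rpow_sub hγ0, Real.rpow_one, div_le_div_iff₀ (by positivity) (by positivity)]
      have he : γ^r/γ*(γ*Ca) = γ^r*Ca := by field_simp
      rw [he]
      nlinarith [Real.rpow_pos_of_pos hγ0 r]
    have hεlb : (γ^(r-1)/(8*Ca))^(2*n) ≤ (ℙ (E γ)).toReal := by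
      have h1 : (1 - Real.exp (-(δ/2)))^(2*n) ≤ (ℙ (E γ)).toReal :=
        (ENNReal.ofReal_le_iff_le_toReal (measure_ne_top _ _)).1 (hlow γ hγ1)
      have h2 : δ/2/2 ≤ 1 - Real.exp (-(δ/2)) := one_sub_exp_neg_ge (by linarith) (by linarith)
      have h3 : γ^(r-1)/(8*Ca) ≤ δ/2/2 := by
        have h4 : γ^(r-1)/(8*Ca) = (γ^(r-1)/(2*Ca))/4 := by ring
        rw [h4]; linarith
      exact le_trans (pow_le_pow_left₀ (by positivity) (le_trans h3 h2) _) h1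
    have hlog1 : (2*n:ℝ)*((r-1)*Real.log γ - Real.log (8*Ca)) ≤ Real.log (ℙ (E γ)).toReal := by
      have e1 : Real.log ((γ^(r-1)/(8*Ca))^(2*n))
          = (2*n:ℝ)*((r-1)*Real.log γ - Real.log (8*Ca)) := by
        rw [Real.log_pow, Real.log_div (by positivity) (by positivity), Real.log_rpow hγ0]
        push_cast; ring
      rw [← e1]
      exact Real.log_le_log (by positivity) hεlb
    have h8Ca : (0:ℝ) ≤ Real.log (8*Ca) := Real.log_nonneg (by linarith)
    show (2*n:ℝ)*(r-1) - (2*n:ℝ)*Real.log (8*Ca) ≤ Real.log (ℙ (E γ)).toReal / Real.log γ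
    have hd1 : ((2*n:ℝ)*((r-1)*Real.log γ - Real.log (8*Ca)))/Real.log γ
        ≤ Real.log (ℙ (E γ)).toReal / Real.log γ := by gcongr
    have expand : ((2*n:ℝ)*((r-1)*Real.log γ - Real.log (8*Ca)))/Real.log γ
        = (2*n:ℝ)*(r-1) - (2*n:ℝ)*(Real.log (8*Ca)/Real.log γ) := by
      field_simp
    have hfrac : Real.log (8*Ca)/Real.log γ ≤ Real.log (8*Ca) := by
      rw [div_le_iff₀ hlogγ]; nlinarith
    have hn2 : (0:ℝ) ≤ 2*(n:ℝ) := by positivity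
    nlinarith [hd1, expand.symm.le, expand.le]
  have hgt : Tendsto g atTop (nhds ((n:ℝ)*(r-1))) := by
    have h0 : Tendsto (fun γ:ℝ => (n:ℝ)*Real.log C1/Real.log γ) atTop (nhds 0) :=
      Tendsto.div_atTop tendsto_const_nhds Real.tendsto_log_atTop
    have := h0.add (tendsto_const_nhds (x := (n:ℝ)*(r-1)))
    simpa using this
  have hcob : IsCoboundedUnder (· ≤ ·) atTop f := isCoboundedUnder_le_of_eventually_le atTop hlb
  have hbdd : IsBoundedUnder (· ≤ ·) atTop g := hgt.isBoundedUnder_le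
  calc limsup f atTop ≤ limsup g atTop := limsup_le_limsup hub hcob hbdd
  _ = (n:ℝ)*(r-1) := hgt.limsup_eq

end Aux

set_option maxHeartbeats 4000000 in
/-- diversity-multiplexing tradeoff of TDMH without relay collaboration:
routing through the single relay `K*` maximizing the harmonic end-to-end metric
`(1/(a_k G_k) + 1/(b_k H_k))⁻¹` achieves
`limsup_{γ→∞} log ε(γ)/log γ ≤ −n(1 − 2m/min{(1+μ)τ_f, (1+1/μ)τ_b})`,
the same DMT as with full relay collaboration. -/
theorem tdmh_optimal_relay_dmt
    {Ω : Type*} [MeasureSpace Ω] [IsProbabilityMeasure (ℙ : Measure Ω)]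
    (n : ℕ) (hn : 1 ≤ n) (a b : Fin n → ℝ) (G H : Fin n → Ω → ℝ)
    (ha : ∀ k, 0 < a k) (hb : ∀ k, 0 < b k)
    (hGmeas : ∀ k, Measurable (G k)) (hHmeas : ∀ k, Measurable (H k))
    (hindep : iIndepFun (Sum.elim G H) ℙ)
    (hGexp : ∀ k, IsUnitExp (G k)) (hHexp : ∀ k, IsUnitExp (H k))
    (K : Ω → Fin n) (hKmeas : Measurable K)
    (hK : ∀ ω k, (1 / (a k * G k ω) + 1 / (b k * H k ω))⁻¹
            ≤ (1 / (a (K ω) * G (K ω) ω) + 1 / (b (K ω) * H (K ω) ω))⁻¹)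
    (τf τb μ m : ℝ)
    (hτf : 0 < τf ∧ τf < 1) (hτb : 0 < τb ∧ τb < 1) (hτ : τf + τb = 1)
    (hμ : 0 < μ)
    (hm : 0 < m) (hm' : m < (1/2) * min ((1 + μ) * τf) ((1 + 1/μ) * τb)) :
    limsup (fun γ : ℝ =>
        Real.log (ℙ {ω |
            (τf / 2) * min (Real.log (1 + γ * (a (K ω) * G (K ω) ω)))
                           (Real.log (1 + γ * (b (K ω) * H (K ω) ω)))
              < (m / (1 + μ)) * Real.log γ ∨
            (τb / 2) * min (Real.log (1 + γ * (a (K ω) * G (K ω) ω)))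
                           (Real.log (1 + γ * (b (K ω) * H (K ω) ω)))
              < (m / (1 + 1/μ)) * Real.log γ}).toReal / Real.log γ) atTop
      ≤ -((n : ℝ) * (1 - 2 * m / min ((1 + μ) * τf) ((1 + 1/μ) * τb))) := by
  classical
  obtain ⟨hτf0, hτf1⟩ := hτf
  obtain ⟨hτb0, hτb1⟩ := hτb
  have hμ1 : (0:ℝ) < 1 + μ := by linarith
  have hμ2 : (0:ℝ) < 1/μ := by positivity
  have hμ3 : (0:ℝ) < 1 + 1/μ := by linarith
  have hnpos : 0 < n := hn
  haveI : Nonempty (Fin n) := ⟨⟨0, hnpos⟩⟩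
  set M := min ((1 + μ) * τf) ((1 + 1/μ) * τb) with hMdef
  have hM : 0 < M := lt_min (by positivity) (by positivity)
  set r := 2 * m / M with hrdef
  have hr0 : 0 < r := by rw [hrdef]; positivity
  have hr1 : r < 1 := by rw [hrdef, div_lt_one hM]; linarith
  set C0 := Finset.univ.sup' Finset.univ_nonempty
    (fun k : Fin n => max (1/(a k)) (1/(b k))) with hC0def
  have hC0k : ∀ k, max (1/(a k)) (1/(b k)) ≤ C0 := by
    intro k; rw [hC0def]
    exact Finset.le_sup' (fun k : Fin n => max (1/(a k)) (1/(b k))) (Finset.mem_univ k)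
  have hC0a : ∀ k, 1/(a k) ≤ C0 := fun k => le_trans (le_max_left _ _) (hC0k k)
  have hC0b : ∀ k, 1/(b k) ≤ C0 := fun k => le_trans (le_max_right _ _) (hC0k k)
  have hC0 : 0 < C0 := by
    have k0 : Fin n := ⟨0, hnpos⟩
    calc (0:ℝ) < 1/(a k0) := by have := ha k0; positivity
    _ ≤ C0 := hC0a k0
  set Ca := max (Finset.univ.sup' Finset.univ_nonempty
    (fun k : Fin n => max (a k) (b k))) 1 with hCadef
  have hCa1 : (1:ℝ) ≤ Ca := le_max_right _ _
  have hCa0 : (0:ℝ) < Ca := by linarith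
  have hCaa : ∀ k, a k ≤ Ca := by
    intro k; rw [hCadef]
    calc a k ≤ max (a k) (b k) := le_max_left _ _
    _ ≤ Finset.univ.sup' Finset.univ_nonempty (fun k : Fin n => max (a k) (b k)) :=
        Finset.le_sup' (fun k : Fin n => max (a k) (b k)) (Finset.mem_univ k)
    _ ≤ _ := le_max_left _ _
  set C1 := 4 * C0 with hC1def
  have hC1 : 0 < C1 := by rw [hC1def]; positivity
  set E : ℝ → Set Ω := fun γ => {ω |
            (τf / 2) * min (Real.log (1 + γ * (a (K ω) * G (K ω) ω)))
                           (Real.log (1 + γ * (b (K ω) * H (K ω) ω)))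
              < (m / (1 + μ)) * Real.log γ ∨
            (τb / 2) * min (Real.log (1 + γ * (a (K ω) * G (K ω) ω)))
                           (Real.log (1 + γ * (b (K ω) * H (K ω) ω)))
              < (m / (1 + 1/μ)) * Real.log γ} with hEdef
  have hup : ∀ γ : ℝ, 1 < γ → ℙ (E γ) ≤ ENNReal.ofReal ((C1 * γ ^ (r-1))^n) := by
    intro γ hγ
    have hγ0 : (0:ℝ) < γ := by linarith
    have hγr : 1 < γ^r := (Real.one_lt_rpow_iff_of_pos hγ0).mpr (Or.inl ⟨hγ, hr0⟩)
    have hlogγ : 0 < Real.log γ := Real.log_pos hγ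
    set t := 2*(γ^r - 1)/γ with htdef
    have ht0 : 0 < t := by rw [htdef]; exact div_pos (by linarith) hγ0
    have htle : t ≤ 2*γ^(r-1) := by
      rw [htdef, Real.rpow_sub hγ0, Real.rpow_one,
        show 2*(γ^r/γ) = 2*γ^r/γ from by ring]
      gcongr
      linarith
    have hMle1 : M ≤ (1+μ)*τf := by rw [hMdef]; exact min_le_left _ _
    have hMle2 : M ≤ (1+1/μ)*τb := by rw [hMdef]; exact min_le_right _ _
    have hrle1 : 2*m/((1+μ)*τf) ≤ r := by
      rw [hrdef, div_le_div_iff₀ (by positivity) hM]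
      nlinarith
    have hrle2 : 2*m/((1+1/μ)*τb) ≤ r := by
      rw [hrdef, div_le_div_iff₀ (by positivity) hM]
      nlinarith
    have hEF : E γ ⊆ (⋃ k, ({ω | G k ω ≤ 0} ∪ {ω | H k ω ≤ 0})) ∪
        ⋂ k, ({ω | G k ω ≤ t/(a k)} ∪ {ω | H k ω ≤ t/(b k)}) := by
      intro ω hω
      by_cases hpos : ∀ k, 0 < G k ω ∧ 0 < H k ω
      case neg =>
        push_neg at hpos
        obtain ⟨k, hk⟩ := hpos
        refine Set.mem_union_left _ (Set.mem_iUnion.2 ⟨k, ?_⟩)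
        by_cases hg : 0 < G k ω
        · exact Set.mem_union_right _ (by simp only [Set.mem_setOf_eq]; linarith [hk hg])
        · exact Set.mem_union_left _ (by simp only [Set.mem_setOf_eq]; linarith)
      case pos =>
        refine Set.mem_union_right _ ?_
        have hGpos : ∀ k, 0 < G k ω := fun k => (hpos k).1
        have hHpos : ∀ k, 0 < H k ω := fun k => (hpos k).2
        have hx : 0 < a (K ω) * G (K ω) ω := mul_pos (ha _) (hGpos _)
        have hy : 0 < b (K ω) * H (K ω) ω := mul_pos (hb _) (hHpos _)
        have hω' : (τf / 2) * min (Real.log (1 + γ * (a (K ω) * G (K ω) ω)))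
                           (Real.log (1 + γ * (b (K ω) * H (K ω) ω)))
              < (m / (1 + μ)) * Real.log γ ∨
            (τb / 2) * min (Real.log (1 + γ * (a (K ω) * G (K ω) ω)))
                           (Real.log (1 + γ * (b (K ω) * H (K ω) ω)))
              < (m / (1 + 1/μ)) * Real.log γ := hω
        have hminI : min (Real.log (1 + γ * (a (K ω) * G (K ω) ω)))
            (Real.log (1 + γ * (b (K ω) * H (K ω) ω))) < r * Real.log γ := by
          rcases hω' with h1 | h2
          · set X := min (Real.log (1 + γ * (a (K ω) * G (K ω) ω)))
                (Real.log (1 + γ * (b (K ω) * H (K ω) ω))) with hXdef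
            have h4 : ((τf/2) * X) * (2*(1+μ)) < ((m/(1+μ))*Real.log γ) * (2*(1+μ)) :=
              mul_lt_mul_of_pos_right h1 (by linarith)
            have h5 : ((τf/2) * X) * (2*(1+μ)) = ((1+μ)*τf) * X := by ring
            have h6 : ((m/(1+μ))*Real.log γ) * (2*(1+μ)) = 2*m*Real.log γ := by
              field_simp
            rw [h5, h6] at h4
            rcases le_or_gt 0 X with hX | hX
            · rw [hrdef, div_mul_eq_mul_div, lt_div_iff₀ hM]
              nlinarith [mul_le_mul_of_nonneg_left hMle1 hX]
            · exact lt_of_lt_of_le hX (by positivity)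
          · set X := min (Real.log (1 + γ * (a (K ω) * G (K ω) ω)))
                (Real.log (1 + γ * (b (K ω) * H (K ω) ω))) with hXdef
            have h4 : ((τb/2) * X) * (2*(1+1/μ)) < ((m/(1+1/μ))*Real.log γ) * (2*(1+1/μ)) :=
              mul_lt_mul_of_pos_right h2 (by linarith)
            have h5 : ((τb/2) * X) * (2*(1+1/μ)) = ((1+1/μ)*τb) * X := by ring
            have h6 : ((m/(1+1/μ))*Real.log γ) * (2*(1+1/μ)) = 2*m*Real.log γ := by
              field_simp
            rw [h5, h6] at h4
            rcases le_or_gt 0 X with hX | hX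
            · rw [hrdef, div_mul_eq_mul_div, lt_div_iff₀ hM]
              nlinarith [mul_le_mul_of_nonneg_left hMle2 hX]
            · exact lt_of_lt_of_le hX (by positivity)
        have hxy : min (a (K ω) * G (K ω) ω) (b (K ω) * H (K ω) ω) < t/2 := by
          rw [← Real.log_rpow hγ0] at hminI
          have ht2 : t/2 = (γ^r-1)/γ := by rw [htdef]; ring
          rcases min_lt_iff.1 hminI with h | h
          · have h2 : 1 + γ*(a (K ω) * G (K ω) ω) < γ^r :=
              (Real.log_lt_log_iff (by positivity) (by positivity)).1 h
            refine lt_of_le_of_lt (min_le_left _ _) ?_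
            rw [ht2, lt_div_iff₀ hγ0]
            nlinarith
          · have h2 : 1 + γ*(b (K ω) * H (K ω) ω) < γ^r :=
              (Real.log_lt_log_iff (by positivity) (by positivity)).1 h
            refine lt_of_le_of_lt (min_le_right _ _) ?_
            rw [ht2, lt_div_iff₀ hγ0]
            nlinarith
        refine Set.mem_iInter.2 fun k => ?_
        have hxk : 0 < a k * G k ω := mul_pos (ha k) (hGpos k)
        have hyk : 0 < b k * H k ω := mul_pos (hb k) (hHpos k)
        have hmk : min (a k * G k ω) (b k * H k ω) < t := by
          have c1 : min (a k * G k ω) (b k * H k ω)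
              ≤ 2 * (1/(a k * G k ω) + 1/(b k * H k ω))⁻¹ := min_le_two_harm hxk hyk
          have c2 : (1/(a k * G k ω) + 1/(b k * H k ω))⁻¹
              ≤ (1/(a (K ω) * G (K ω) ω) + 1/(b (K ω) * H (K ω) ω))⁻¹ := hK ω k
          have c3 : (1/(a (K ω) * G (K ω) ω) + 1/(b (K ω) * H (K ω) ω))⁻¹
              ≤ min (a (K ω) * G (K ω) ω) (b (K ω) * H (K ω) ω) := harm_le_min hx hy
          linarith
        rcases min_lt_iff.1 hmk with h | h
        · refine Set.mem_union_left _ ?_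
          simp only [Set.mem_setOf_eq]
          rw [le_div_iff₀ (ha k)]
          nlinarith
        · refine Set.mem_union_right _ ?_
          simp only [Set.mem_setOf_eq]
          rw [le_div_iff₀ (hb k)]
          nlinarith
    have hNnull : ℙ (⋃ k, ({ω | G k ω ≤ 0} ∪ {ω | H k ω ≤ 0})) = 0 := by
      refine le_antisymm ?_ zero_le
      calc ℙ (⋃ k, ({ω | G k ω ≤ 0} ∪ {ω | H k ω ≤ 0}))
          ≤ ∑ k : Fin n, ℙ ({ω | G k ω ≤ 0} ∪ {ω | H k ω ≤ 0}) :=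
            measure_iUnion_fintype_le _ _
      _ ≤ ∑ _k : Fin n, (0:ENNReal) := Finset.sum_le_sum (fun k _ => by
            calc ℙ ({ω | G k ω ≤ 0} ∪ {ω | H k ω ≤ 0})
                ≤ ℙ {ω | G k ω ≤ 0} + ℙ {ω | H k ω ≤ 0} := measure_union_le _ _
            _ = 0 := by
                rw [unitExp_le_zero (hGmeas k) (hGexp k),
                  unitExp_le_zero (hHmeas k) (hHexp k), add_zero])
      _ = 0 := by simp
    have hFsub : (⋂ k, ({ω | G k ω ≤ t/(a k)} ∪ {ω | H k ω ≤ t/(b k)}))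
        ⊆ ⋃ σ : Fin n → Bool, ⋂ k,
          (if σ k then {ω | G k ω ≤ t/(a k)} else {ω | H k ω ≤ t/(b k)}) := by
      intro ω hω
      simp only [Set.mem_iInter, Set.mem_union, Set.mem_setOf_eq] at hω
      refine Set.mem_iUnion.2 ⟨fun k => if G k ω ≤ t/(a k) then true else false,
        Set.mem_iInter.2 fun k => ?_⟩
      by_cases hc : G k ω ≤ t/(a k)
      · simp only [if_pos hc, if_true, Set.mem_setOf_eq]
        exact hc
      · have h2 : H k ω ≤ t/(b k) := (hω k).resolve_left hc
        simp only [if_neg hc, if_false]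
        exact h2
    have hterm : ∀ σ : Fin n → Bool,
        ℙ (⋂ k, (if σ k then {ω | G k ω ≤ t/(a k)} else {ω | H k ω ≤ t/(b k)}))
          ≤ ENNReal.ofReal ((C0*t)^n) := by
      intro σ
      set S : (Fin n ⊕ Fin n) → Set Ω := Sum.elim
        (fun k => if σ k then {ω | G k ω ≤ t/(a k)} else Set.univ)
        (fun k => if σ k then Set.univ else {ω | H k ω ≤ t/(b k)}) with hSdef
      have hset : (⋂ k, (if σ k then {ω | G k ω ≤ t/(a k)} else {ω | H k ω ≤ t/(b k)}))
          = ⋂ i, S i := by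
        rw [Set.iInter_sum, ← Set.iInter_inter_distrib]
        apply Set.iInter_congr
        intro k
        by_cases hc : σ k <;> simp [hSdef, hc]
      have hSmeas : ∀ i, MeasurableSet[(inferInstance : MeasurableSpace ℝ).comap
          (Sum.elim G H i)] (S i) := by
        rintro (k | k)
        · by_cases hc : σ k
          · exact ⟨Set.Iic (t/(a k)), measurableSet_Iic, by simp [hSdef, hc]; rfl⟩
          · exact ⟨Set.univ, MeasurableSet.univ, by simp [hSdef, hc]⟩
        · by_cases hc : σ k
          · exact ⟨Set.univ, MeasurableSet.univ, by simp [hSdef, hc]⟩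
          · exact ⟨Set.Iic (t/(b k)), measurableSet_Iic, by simp [hSdef, hc]; rfl⟩
      have hprod := hindep.meas_iInter hSmeas
      rw [hset, hprod, Fintype.prod_sum_type, ← Finset.prod_mul_distrib]
      have hkb : ∀ k : Fin n, ℙ (S (Sum.inl k)) * ℙ (S (Sum.inr k))
          ≤ ENNReal.ofReal (C0*t) := by
        intro k
        have hta : t/(a k) ≤ C0*t := by
          calc t/(a k) = t * (1/(a k)) := by ring
          _ ≤ t * C0 := mul_le_mul_of_nonneg_left (hC0a k) ht0.le
          _ = C0*t := mul_comm _ _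
        have htb : t/(b k) ≤ C0*t := by
          calc t/(b k) = t * (1/(b k)) := by ring
          _ ≤ t * C0 := mul_le_mul_of_nonneg_left (hC0b k) ht0.le
          _ = C0*t := mul_comm _ _
        by_cases hc : σ k
        · have h1 : ℙ (S (Sum.inl k)) ≤ ENNReal.ofReal (t/(a k)) := by
            simp only [hSdef, Sum.elim_inl, if_pos hc]
            exact unitExp_Iic_le (hGmeas k) (hGexp k) (by have := ha k; positivity)
          have h2 : ℙ (S (Sum.inr k)) = 1 := by
            simp [hSdef, hc]
          rw [h2, mul_one]
          exact le_trans h1 (ENNReal.ofReal_le_ofReal hta)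
        · have h1 : ℙ (S (Sum.inr k)) ≤ ENNReal.ofReal (t/(b k)) := by
            simp only [hSdef, Sum.elim_inr, if_neg hc]
            exact unitExp_Iic_le (hHmeas k) (hHexp k) (by have := hb k; positivity)
          have h2 : ℙ (S (Sum.inl k)) = 1 := by
            simp [hSdef, hc]
          rw [h2, one_mul]
          exact le_trans h1 (ENNReal.ofReal_le_ofReal htb)
      calc ∏ k : Fin n, (ℙ (S (Sum.inl k)) * ℙ (S (Sum.inr k)))
          ≤ ∏ _k : Fin n, ENNReal.ofReal (C0*t) :=
            Finset.prod_le_prod' (fun k _ => hkb k)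
      _ = ENNReal.ofReal (C0*t) ^ n := by
          rw [Finset.prod_const, Finset.card_univ, Fintype.card_fin]
      _ = ENNReal.ofReal ((C0*t)^n) := by
          rw [ENNReal.ofReal_pow (by positivity)]
    calc ℙ (E γ)
        ≤ ℙ ((⋃ k, ({ω | G k ω ≤ 0} ∪ {ω | H k ω ≤ 0})) ∪
            ⋂ k, ({ω | G k ω ≤ t/(a k)} ∪ {ω | H k ω ≤ t/(b k)})) := measure_mono hEF
      _ ≤ ℙ (⋃ k, ({ω | G k ω ≤ 0} ∪ {ω | H k ω ≤ 0})) +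
          ℙ (⋂ k, ({ω | G k ω ≤ t/(a k)} ∪ {ω | H k ω ≤ t/(b k)})) := measure_union_le _ _
      _ = ℙ (⋂ k, ({ω | G k ω ≤ t/(a k)} ∪ {ω | H k ω ≤ t/(b k)})) := by
          rw [hNnull, zero_add]
      _ ≤ ∑ σ : Fin n → Bool, ℙ (⋂ k,
            (if σ k then {ω | G k ω ≤ t/(a k)} else {ω | H k ω ≤ t/(b k)})) :=
          le_trans (measure_mono hFsub) (measure_iUnion_fintype_le _ _)
      _ ≤ ∑ _σ : Fin n → Bool, ENNReal.ofReal ((C0*t)^n) :=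
          Finset.sum_le_sum (fun σ _ => hterm σ)
      _ = (2^n : ℕ) * ENNReal.ofReal ((C0*t)^n) := by
          rw [Finset.sum_const, Finset.card_univ, Fintype.card_fun, Fintype.card_bool,
            Fintype.card_fin, nsmul_eq_mul]
      _ ≤ ENNReal.ofReal ((C1 * γ ^ (r-1))^n) := by
          have hcast : ((2^n : ℕ) : ENNReal) = ENNReal.ofReal ((2:ℝ)^n) := by
            rw [ENNReal.ofReal_pow (by norm_num)]
            norm_num
          rw [hcast, ← ENNReal.ofReal_mul (by positivity)]
          apply ENNReal.ofReal_le_ofReal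
          rw [← mul_pow]
          apply pow_le_pow_left₀ (by positivity)
          have hrp : (0:ℝ) < γ^(r-1) := Real.rpow_pos_of_pos hγ0 _
          rw [hC1def]
          nlinarith
  have hlow : ∀ γ : ℝ, 1 < γ →
      ENNReal.ofReal ((1 - Real.exp (-((γ^r - 1)/(γ*Ca)/2)))^(2*n)) ≤ ℙ (E γ) := by
    intro γ hγ
    have hγ0 : (0:ℝ) < γ := by linarith
    have hγr : 1 < γ^r := (Real.one_lt_rpow_iff_of_pos hγ0).mpr (Or.inl ⟨hγ, hr0⟩)
    have hlogγ : 0 < Real.log γ := Real.log_pos hγ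
    set δ := (γ^r - 1)/(γ*Ca) with hδdef
    have hδ0 : 0 < δ := by rw [hδdef]; exact div_pos (by linarith) (mul_pos hγ0 hCa0)
    have hsub : (⋂ i : Fin n ⊕ Fin n, (Sum.elim G H i) ⁻¹' Set.Ioo 0 δ) ⊆ E γ := by
      intro ω hω
      have hG : ∀ k, G k ω ∈ Set.Ioo 0 δ := by
        intro k
        simpa using Set.mem_iInter.1 hω (Sum.inl k)
      have hH : ∀ k, H k ω ∈ Set.Ioo 0 δ := by
        intro k
        simpa using Set.mem_iInter.1 hω (Sum.inr k)
      have hx : 0 < a (K ω) * G (K ω) ω := mul_pos (ha _) (hG _).1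
      have hy : 0 < b (K ω) * H (K ω) ω := mul_pos (hb _) (hH _).1
      have hlt : a (K ω) * G (K ω) ω < (γ^r - 1)/γ := by
        have h1 : a (K ω) * G (K ω) ω < a (K ω) * δ :=
          mul_lt_mul_of_pos_left (hG _).2 (ha _)
        have h2 : a (K ω) * δ ≤ Ca * δ := mul_le_mul_of_nonneg_right (hCaa _) hδ0.le
        have h3 : Ca * δ = (γ^r - 1)/γ := by
          rw [hδdef]
          field_simp
        linarith
      have hlog : Real.log (1 + γ * (a (K ω) * G (K ω) ω)) < r * Real.log γ := by
        rw [← Real.log_rpow hγ0]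
        apply Real.log_lt_log (by positivity)
        have h4 := (lt_div_iff₀ hγ0).1 hlt
        nlinarith
      have hminlt : min (Real.log (1 + γ * (a (K ω) * G (K ω) ω)))
          (Real.log (1 + γ * (b (K ω) * H (K ω) ω))) < r * Real.log γ :=
        lt_of_le_of_lt (min_le_left _ _) hlog
      show (τf / 2) * min (Real.log (1 + γ * (a (K ω) * G (K ω) ω)))
                           (Real.log (1 + γ * (b (K ω) * H (K ω) ω)))
              < (m / (1 + μ)) * Real.log γ ∨
            (τb / 2) * min (Real.log (1 + γ * (a (K ω) * G (K ω) ω)))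
                           (Real.log (1 + γ * (b (K ω) * H (K ω) ω)))
              < (m / (1 + 1/μ)) * Real.log γ
      rcases le_total ((1+μ)*τf) ((1+1/μ)*τb) with hc | hc
      · left
        have hMeq : M = (1+μ)*τf := by rw [hMdef]; exact min_eq_left hc
        have heq : (τf/2) * (r * Real.log γ) = (m/(1+μ)) * Real.log γ := by
          rw [hrdef, hMeq]
          field_simp
        exact lt_of_lt_of_le (mul_lt_mul_of_pos_left hminlt (by linarith)) (le_of_eq heq)
      · right
        have hMeq : M = (1+1/μ)*τb := by rw [hMdef]; exact min_eq_right hc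
        have heq : (τb/2) * (r * Real.log γ) = (m/(1+1/μ)) * Real.log γ := by
          rw [hrdef, hMeq]
          field_simp
        exact lt_of_lt_of_le (mul_lt_mul_of_pos_left hminlt (by linarith)) (le_of_eq heq)
    have hmeas : ∀ i : Fin n ⊕ Fin n,
        MeasurableSet[(inferInstance : MeasurableSpace ℝ).comap (Sum.elim G H i)]
          ((Sum.elim G H i) ⁻¹' Set.Ioo 0 δ) :=
      fun i => ⟨Set.Ioo 0 δ, measurableSet_Ioo, rfl⟩
    have hprod := hindep.meas_iInter hmeas
    have hexp1 : Real.exp (-(δ/2)) ≤ 1 := Real.exp_le_one_iff.2 (by linarith)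
    have hfac : ∀ i : Fin n ⊕ Fin n,
        ENNReal.ofReal (1 - Real.exp (-(δ/2))) ≤ ℙ ((Sum.elim G H i) ⁻¹' Set.Ioo 0 δ) := by
      rintro (k | k)
      · exact unitExp_Ioo_ge (hGmeas k) (hGexp k) hδ0
      · exact unitExp_Ioo_ge (hHmeas k) (hHexp k) hδ0
    calc ENNReal.ofReal ((1 - Real.exp (-(δ/2)))^(2*n))
        = ENNReal.ofReal (1 - Real.exp (-(δ/2)))^(2*n) := by
          rw [ENNReal.ofReal_pow (by linarith)]
      _ = ∏ _i : Fin n ⊕ Fin n, ENNReal.ofReal (1 - Real.exp (-(δ/2))) := by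
          rw [Finset.prod_const, Finset.card_univ, Fintype.card_sum, Fintype.card_fin]
          congr 1
          omega
      _ ≤ ∏ i : Fin n ⊕ Fin n, ℙ ((Sum.elim G H i) ⁻¹' Set.Ioo 0 δ) :=
          Finset.prod_le_prod' (fun i _ => hfac i)
      _ = ℙ (⋂ i : Fin n ⊕ Fin n, (Sum.elim G H i) ⁻¹' Set.Ioo 0 δ) := hprod.symm
      _ ≤ ℙ (E γ) := measure_mono hsub
  have happ := limsup_aux E n r C1 Ca hr0 hr1 hC1 hCa1 hup hlow
  refine le_trans happ (le_of_eq (by ring))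
end

section
/- Fix n ≥ 1 relays with path gains a_k > 0 (source A to relay k) and b_k > 0 (relay k to source B), and let G_1, …, G_n, H_1, …, H_n be mutually independent unit-rate exponential fading powers. Let K* be the (almost surely unique) index maximizing (1/(a_k G_k) + 2/(b_k H_k))^{-1} over k = 1, …, n. Let τ_f, τ_b ∈ (0,1) with τ_f + τ_b = 1, let μ > 0, and let 0 < m < (2/3)·min{(1+μ)τ_f, (1+1/μ)τ_b}. For γ > 1 define Ĩ_1(γ) = log(1 + γ a_{K*} G_{K*}), Ĩ_2(γ) = log(1 + γ b_{K*} H_{K*}), and the outage probability ε(γ) = P[ {(2τ_f/3)·min(Ĩ_1, Ĩ_2) < (m/(1+μ)) log γ} ∪ {(2τ_b/3)·min(Ĩ_1, Ĩ_2) < (m/(1+1/μ)) log γ} ]. Then limsup_{γ→∞} log ε(γ)/log γ ≤ −n·(1 − 3m / (2·min{(1+μ)τ_f, (1+1/μ)τ_b})); that is, network coding through a single optimally selected relay that both receives and broadcasts achieves the same diversity-multiplexing tradeoff as network coding with collaborative reception and optimal broadcast relay selection. -/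
open MeasureTheory ProbabilityTheory Filter

lemma aux_exp_lb_s13 (x : ℝ) : 1 - Real.exp (-x) ≤ x := by
  nlinarith [Real.add_one_le_exp (-x)]

lemma aux_exp_ub {x : ℝ} (h0 : 0 ≤ x) (h1 : x ≤ 1) : x / 3 ≤ 1 - Real.exp (-x) := by
  have h2 := Real.add_one_le_exp x
  have hmul : Real.exp (-x) * Real.exp x = 1 := by rw [← Real.exp_add]; simp
  have h3 : Real.exp (-1 : ℝ) ≤ Real.exp (-x) := Real.exp_le_exp.2 (by linarith)
  have h4 : Real.exp (1:ℝ) < 3 := lt_of_lt_of_le Real.exp_one_lt_d9 (by norm_num)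
  have h5 : (3:ℝ)⁻¹ ≤ (Real.exp 1)⁻¹ := by
    apply inv_anti₀ (Real.exp_pos 1) h4.le
  have h6 : Real.exp (-1:ℝ) = (Real.exp 1)⁻¹ := Real.exp_neg 1
  nlinarith [Real.exp_pos (-x)]

section
variable {Ω : Type*} [MeasureSpace Ω] [IsProbabilityMeasure (ℙ : Measure Ω)]

lemma unitExp_nonpos {g : Ω → ℝ} (hg : Measurable g) (he : IsUnitExp g) :
    ℙ {ω | g ω ≤ 0} = 0 := by
  have h := he 0 le_rfl
  have hs : {ω | g ω ≤ 0} = {ω | (0:ℝ) < g ω}ᶜ := by ext ω; simp [not_lt]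
  rw [hs, measure_compl (measurableSet_lt measurable_const hg) (measure_ne_top _ _), h]
  simp

lemma unitExp_Iio_le {g : Ω → ℝ} (hg : Measurable g) (he : IsUnitExp g) {x : ℝ} (hx : 0 ≤ x) :
    ℙ (g ⁻¹' Set.Iio x) ≤ ENNReal.ofReal x := by
  have hsub : g ⁻¹' Set.Iio x ⊆ {ω | x < g ω}ᶜ := fun ω h => by
    simp only [Set.mem_compl_iff, Set.mem_setOf_eq, not_lt]
    exact le_of_lt h
  calc ℙ (g ⁻¹' Set.Iio x) ≤ ℙ ({ω | x < g ω}ᶜ) := measure_mono hsub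
    _ = 1 - ENNReal.ofReal (Real.exp (-x)) := by
        rw [measure_compl (measurableSet_lt measurable_const hg) (measure_ne_top _ _),
          he x hx, measure_univ]
    _ ≤ ENNReal.ofReal x := by
        rw [← ENNReal.ofReal_one, ← ENNReal.ofReal_sub _ (Real.exp_nonneg _)]
        exact ENNReal.ofReal_le_ofReal (aux_exp_lb_s13 x)

lemma unitExp_Ioc {g : Ω → ℝ} (hg : Measurable g) (he : IsUnitExp g) {x : ℝ} (hx : 0 ≤ x) :
    ℙ (g ⁻¹' Set.Ioc 0 x) = ENNReal.ofReal (1 - Real.exp (-x)) := by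
  have h1 : g ⁻¹' Set.Ioc 0 x = {ω | (0:ℝ) < g ω} \ {ω | x < g ω} := by
    ext ω; simp only [Set.mem_preimage, Set.mem_Ioc, Set.mem_diff, Set.mem_setOf_eq, not_lt]
  have hsub : {ω | x < g ω} ⊆ {ω | (0:ℝ) < g ω} := fun ω h => lt_of_le_of_lt hx h
  rw [h1, measure_diff hsub (measurableSet_lt measurable_const hg).nullMeasurableSet
      (measure_ne_top _ _), he x hx, he 0 le_rfl, neg_zero, Real.exp_zero,
      ENNReal.ofReal_sub _ (Real.exp_nonneg _), ENNReal.ofReal_one]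

lemma indep_prod_eq {n : ℕ} {G H : Fin n → Ω → ℝ}
    (hindep : iIndepFun (Sum.elim G H) ℙ)
    (ι : Fin n → Fin n ⊕ Fin n) (hι : Function.Injective ι)
    (s : Fin n ⊕ Fin n → Set ℝ) (hs : ∀ i, MeasurableSet (s i)) :
    ℙ (⋂ k, Sum.elim G H (ι k) ⁻¹' s (ι k)) = ∏ k, ℙ (Sum.elim G H (ι k) ⁻¹' s (ι k)) := by
  have h := hindep.meas_biInter (S := Finset.univ.map ⟨ι, hι⟩)
      (s := fun i => Sum.elim G H i ⁻¹' s i) (fun i _ => ⟨s i, hs i, rfl⟩)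
  have h2 : (⋂ i ∈ Finset.univ.map ⟨ι, hι⟩, Sum.elim G H i ⁻¹' s i)
      = ⋂ k, Sum.elim G H (ι k) ⁻¹' s (ι k) := by
    ext ω; simp
  rw [h2] at h
  rw [h, Finset.prod_map]
  rfl

lemma stepA {n : ℕ} (a b : Fin n → ℝ) (G H : Fin n → Ω → ℝ)
    (ha : ∀ k, 0 < a k) (hb : ∀ k, 0 < b k)
    (hGmeas : ∀ k, Measurable (G k)) (hHmeas : ∀ k, Measurable (H k))
    (hindep : iIndepFun (Sum.elim G H) ℙ)
    (hGexp : ∀ k, IsUnitExp (G k)) (hHexp : ∀ k, IsUnitExp (H k))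
    (K : Ω → Fin n)
    (hK : ∀ ω k, (1 / (a k * G k ω) + 2 / (b k * H k ω))⁻¹
            ≤ (1 / (a (K ω) * G (K ω) ω) + 2 / (b (K ω) * H (K ω) ω))⁻¹)
    {γ ρ : ℝ} (hγ : 1 < γ) (hρ : 0 < ρ) :
    ℙ {ω | min (Real.log (1 + γ * (a (K ω) * G (K ω) ω)))
              (Real.log (1 + γ * (b (K ω) * H (K ω) ω))) < ρ * Real.log γ}
      ≤ ENNReal.ofReal (((6:ℝ)^n * ∏ k, max (1 / a k) (1 / b k)) * ((γ ^ ρ - 1) / γ) ^ n) := by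
  have hγ0 : (0:ℝ) < γ := lt_trans one_pos hγ
  have hγρ : 1 < γ ^ ρ := (Real.one_lt_rpow_iff_of_pos hγ0).2 (Or.inl ⟨hγ, hρ⟩)
  set t : ℝ := (γ ^ ρ - 1) / γ with ht_def
  have ht : 0 < t := div_pos (by linarith) hγ0
  set ιf : (Fin n → Bool) → Fin n → Fin n ⊕ Fin n :=
    fun f k => if f k then Sum.inl k else Sum.inr k with hιf_def
  have hιinj : ∀ f, Function.Injective (ιf f) := by
    intro f k k' h
    by_cases h1 : f k <;> by_cases h2 : f k' <;> simp [hιf_def, h1, h2] at h <;>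
      first | exact h | exact h.elim
  set v : Fin n ⊕ Fin n → ℝ := Sum.elim (fun k => 3 * t / a k) (fun k => 3 * t / b k) with hv
  set Ef : (Fin n → Bool) → Set Ω :=
    fun f => ⋂ k, Sum.elim G H (ιf f k) ⁻¹' Set.Iio (v (ιf f k)) with hEf_def
  set Ω₀ : Set Ω := {ω | ∀ k, 0 < G k ω ∧ 0 < H k ω} with hΩ₀_def
  have hΩ₀ : ℙ (Ω₀ᶜ) = 0 := by
    have hsub : Ω₀ᶜ ⊆ ⋃ k : Fin n, ({ω | G k ω ≤ 0} ∪ {ω | H k ω ≤ 0}) := by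
      intro ω hω
      simp only [hΩ₀_def, Set.mem_compl_iff, Set.mem_setOf_eq, not_forall] at hω
      obtain ⟨k, hk⟩ := hω
      rw [not_and_or, not_lt, not_lt] at hk
      exact Set.mem_iUnion.2 ⟨k, hk.imp (fun h => h) (fun h => h)⟩
    exact measure_mono_null hsub (measure_iUnion_null fun k =>
      measure_union_null (unitExp_nonpos (hGmeas k) (hGexp k))
        (unitExp_nonpos (hHmeas k) (hHexp k)))
  have hsub : {ω | min (Real.log (1 + γ * (a (K ω) * G (K ω) ω)))
              (Real.log (1 + γ * (b (K ω) * H (K ω) ω))) < ρ * Real.log γ}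
      ⊆ Ω₀ᶜ ∪ ⋃ f : Fin n → Bool, Ef f := by
    intro ω hω
    by_cases hω0 : ω ∈ Ω₀
    · right
      have hX : ∀ k, 0 < a k * G k ω := fun k => mul_pos (ha k) (hω0 k).1
      have hY : ∀ k, 0 < b k * H k ω := fun k => mul_pos (hb k) (hω0 k).2
      have hminK : min (a (K ω) * G (K ω) ω) (b (K ω) * H (K ω) ω) < t := by
        have hω' : min (Real.log (1 + γ * (a (K ω) * G (K ω) ω)))
            (Real.log (1 + γ * (b (K ω) * H (K ω) ω))) < Real.log (γ ^ ρ) := by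
          rw [Real.log_rpow hγ0]; exact hω
        rcases le_total (Real.log (1 + γ * (a (K ω) * G (K ω) ω)))
            (Real.log (1 + γ * (b (K ω) * H (K ω) ω))) with h12 | h12
        · rw [min_eq_left h12] at hω'
          have hpos : 0 < 1 + γ * (a (K ω) * G (K ω) ω) := by
            have := mul_pos hγ0 (hX (K ω)); linarith
          have hlt := (Real.log_lt_log_iff hpos (by positivity)).1 hω'
          refine lt_of_le_of_lt (min_le_left _ _) ?_
          rw [ht_def, lt_div_iff₀ hγ0]; nlinarith
        · rw [min_eq_right h12] at hω'
          have hpos : 0 < 1 + γ * (b (K ω) * H (K ω) ω) := by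
            have := mul_pos hγ0 (hY (K ω)); linarith
          have hlt := (Real.log_lt_log_iff hpos (by positivity)).1 hω'
          refine lt_of_le_of_lt (min_le_right _ _) ?_
          rw [ht_def, lt_div_iff₀ hγ0]; nlinarith
      have hall : ∀ k, a k * G k ω < 3 * t ∨ b k * H k ω < 3 * t := by
        intro k
        have hXk := hX k; have hYk := hY k
        have hXK := hX (K ω); have hYK := hY (K ω)
        have hKk := hK ω k
        set X := a k * G k ω with hXd
        set Y := b k * H k ω with hYd
        set XK := a (K ω) * G (K ω) ω with hXKd
        set YK := b (K ω) * H (K ω) ω with hYKd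
        have hm0 : 0 < min X Y := lt_min hXk hYk
        have hsum : 0 < 1 / X + 2 / Y := by positivity
        have hS1 : min X Y / 3 ≤ (1 / X + 2 / Y)⁻¹ := by
          have hle : 1 / X + 2 / Y ≤ 3 / min X Y := by
            have h1 : 1 / X ≤ 1 / min X Y :=
              one_div_le_one_div_of_le hm0 (min_le_left _ _)
            have h2 : 2 / Y ≤ 2 / min X Y :=
              div_le_div_of_nonneg_left (by norm_num) hm0 (min_le_right _ _)
            have h3 : 3 / min X Y = 1 / min X Y + 2 / min X Y := by ring
            linarith
          calc min X Y / 3 = (3 / min X Y)⁻¹ := by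
                rw [inv_div]
            _ ≤ (1 / X + 2 / Y)⁻¹ := inv_anti₀ hsum hle
        have hS2 : (1 / XK + 2 / YK)⁻¹ ≤ min XK YK := by
          refine le_min ?_ ?_
          · have h1 : 1 / XK ≤ 1 / XK + 2 / YK :=
              (le_add_iff_nonneg_right _).2 (by positivity)
            calc (1 / XK + 2 / YK)⁻¹ ≤ (1 / XK)⁻¹ := inv_anti₀ (by positivity) h1
              _ = XK := by rw [one_div, inv_inv]
          · have h1 : 2 / YK ≤ 1 / XK + 2 / YK :=
              (le_add_iff_nonneg_left _).2 (by positivity)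
            calc (1 / XK + 2 / YK)⁻¹ ≤ (2 / YK)⁻¹ := inv_anti₀ (by positivity) h1
              _ = YK / 2 := by rw [inv_div]
              _ ≤ YK := by linarith
        have hchain : min X Y < 3 * t := by
          have h1 : min X Y / 3 ≤ min XK YK := le_trans (le_trans hS1 hKk) hS2
          have h2 : min XK YK < t := hminK
          linarith
        exact min_lt_iff.1 hchain
      refine Set.mem_iUnion.2 ⟨fun k => decide (G k ω < 3 * t / a k), ?_⟩
      refine Set.mem_iInter.2 fun k => ?_
      by_cases hd : G k ω < 3 * t / a k
      · have hik : ιf (fun k => decide (G k ω < 3 * t / a k)) k = Sum.inl k := by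
          simp [hιf_def, hd]
        simp only [hik, Sum.elim_inl, hv, Set.mem_preimage, Set.mem_Iio]
        exact hd
      · have hH' : H k ω < 3 * t / b k := by
          rcases hall k with h | h
          · exact absurd (by rw [lt_div_iff₀ (ha k), mul_comm]; exact h) hd
          · rw [lt_div_iff₀ (hb k), mul_comm]; exact h
        have hik : ιf (fun k => decide (G k ω < 3 * t / a k)) k = Sum.inr k := by
          simp [hιf_def, hd]
        simp only [hik, Sum.elim_inr, hv, Set.mem_preimage, Set.mem_Iio]
        exact hH'
    · exact Or.inl hω0
  have hEfb : ∀ f : Fin n → Bool,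
      ℙ (Ef f) ≤ ENNReal.ofReal ((3*t)^n * ∏ k, max (1 / a k) (1 / b k)) := by
    intro f
    have heq := indep_prod_eq hindep (ιf f) (hιinj f) (fun i => Set.Iio (v i))
      (fun i => measurableSet_Iio)
    rw [hEf_def]
    rw [heq]
    calc ∏ k, ℙ (Sum.elim G H (ιf f k) ⁻¹' Set.Iio (v (ιf f k)))
        ≤ ∏ k, ENNReal.ofReal (3 * t * max (1 / a k) (1 / b k)) := by
          refine Finset.prod_le_prod' fun k _ => ?_
          by_cases hfk : f k
          · have hik : ιf f k = Sum.inl k := by simp [hιf_def, hfk]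
            rw [hik]
            simp only [Sum.elim_inl, hv]
            refine le_trans (unitExp_Iio_le (hGmeas k) (hGexp k) (div_pos (by linarith) (ha k)).le) ?_
            apply ENNReal.ofReal_le_ofReal
            rw [div_eq_mul_one_div]
            exact mul_le_mul_of_nonneg_left (le_max_left _ _) (by positivity)
          · have hik : ιf f k = Sum.inr k := by simp [hιf_def, hfk]
            rw [hik]
            simp only [Sum.elim_inr, hv]
            refine le_trans (unitExp_Iio_le (hHmeas k) (hHexp k) (div_pos (by linarith) (hb k)).le) ?_
            apply ENNReal.ofReal_le_ofReal
            rw [div_eq_mul_one_div]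
            exact mul_le_mul_of_nonneg_left (le_max_right _ _) (by positivity)
      _ = ENNReal.ofReal (∏ k, 3 * t * max (1 / a k) (1 / b k)) :=
          (ENNReal.ofReal_prod_of_nonneg (fun k _ => mul_nonneg (by linarith)
            (le_trans (one_div_pos.2 (ha k)).le (le_max_left _ _)))).symm
      _ = ENNReal.ofReal ((3*t)^n * ∏ k, max (1 / a k) (1 / b k)) := by
          rw [Finset.prod_mul_distrib, Finset.prod_const, Finset.card_univ, Fintype.card_fin]
  calc ℙ {ω | min (Real.log (1 + γ * (a (K ω) * G (K ω) ω)))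
              (Real.log (1 + γ * (b (K ω) * H (K ω) ω))) < ρ * Real.log γ}
      ≤ ℙ (Ω₀ᶜ ∪ ⋃ f : Fin n → Bool, Ef f) := measure_mono hsub
    _ ≤ ℙ (Ω₀ᶜ) + ℙ (⋃ f : Fin n → Bool, Ef f) := measure_union_le _ _
    _ = ℙ (⋃ f : Fin n → Bool, Ef f) := by rw [hΩ₀, zero_add]
    _ ≤ ∑ f : Fin n → Bool, ℙ (Ef f) := measure_iUnion_fintype_le _ _
    _ ≤ ∑ _f : Fin n → Bool,
          ENNReal.ofReal ((3*t)^n * ∏ k, max (1 / a k) (1 / b k)) :=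
        Finset.sum_le_sum (fun f _ => hEfb f)
    _ = (2^n : ℕ) • ENNReal.ofReal ((3*t)^n * ∏ k, max (1 / a k) (1 / b k)) := by
        rw [Finset.sum_const, Finset.card_univ]
        congr 1
        simp [Fintype.card_fun]
    _ = ENNReal.ofReal (((6:ℝ)^n * ∏ k, max (1 / a k) (1 / b k)) * t ^ n) := by
        rw [nsmul_eq_mul, ← ENNReal.ofReal_natCast, ← ENNReal.ofReal_mul (by positivity)]
        congr 1
        push_cast
        rw [mul_pow, show ((6:ℝ)^n = 2^n * 3^n) by rw [← mul_pow]; norm_num]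
        ring

lemma stepB {n : ℕ} (a b : Fin n → ℝ) (G H : Fin n → Ω → ℝ)
    (ha : ∀ k, 0 < a k)
    (hGmeas : ∀ k, Measurable (G k))
    (hindep : iIndepFun (Sum.elim G H) ℙ)
    (hGexp : ∀ k, IsUnitExp (G k))
    (K : Ω → Fin n)
    {γ ρ : ℝ} (hγ : 1 < γ) (hρ : 0 < ρ)
    (hsm : ∀ k, (γ ^ ρ - 1) / (2 * γ) ≤ a k) :
    ENNReal.ofReal (((γ ^ ρ - 1) / (2 * γ)) ^ n / ∏ k, (3 * a k))
      ≤ ℙ {ω | min (Real.log (1 + γ * (a (K ω) * G (K ω) ω)))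
              (Real.log (1 + γ * (b (K ω) * H (K ω) ω))) < ρ * Real.log γ} := by
  have hγ0 : (0:ℝ) < γ := lt_trans one_pos hγ
  have hγρ : 1 < γ ^ ρ := (Real.one_lt_rpow_iff_of_pos hγ0).2 (Or.inl ⟨hγ, hρ⟩)
  set t' : ℝ := (γ ^ ρ - 1) / (2 * γ) with ht_def
  have ht' : 0 < t' := div_pos (by linarith) (by linarith)
  set F : Set Ω := ⋂ k, G k ⁻¹' Set.Ioc 0 (t' / a k) with hF_def
  have hFsub : F ⊆ {ω | min (Real.log (1 + γ * (a (K ω) * G (K ω) ω)))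
              (Real.log (1 + γ * (b (K ω) * H (K ω) ω))) < ρ * Real.log γ} := by
    intro ω hω
    simp only [hF_def, Set.mem_iInter, Set.mem_preimage, Set.mem_Ioc] at hω
    obtain ⟨hg0, hg1⟩ := hω (K ω)
    have hXpos : 0 < a (K ω) * G (K ω) ω := mul_pos (ha _) hg0
    have hXK : a (K ω) * G (K ω) ω ≤ t' := by
      have h := mul_le_mul_of_nonneg_left hg1 (ha (K ω)).le
      rwa [mul_div_assoc', mul_div_cancel_left₀ _ (ne_of_gt (ha (K ω)))] at h
    have hgt' : γ * t' = (γ ^ ρ - 1) / 2 := by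
      rw [ht_def]
      field_simp
    show min _ _ < ρ * Real.log γ
    refine lt_of_le_of_lt (min_le_left _ _) ?_
    calc Real.log (1 + γ * (a (K ω) * G (K ω) ω))
        ≤ Real.log (1 + γ * t') := Real.log_le_log (by nlinarith) (by nlinarith)
      _ < Real.log (γ ^ ρ) := Real.log_lt_log (by nlinarith) (by rw [hgt']; linarith)
      _ = ρ * Real.log γ := Real.log_rpow hγ0 ρ
  have hFm : ℙ F = ∏ k, ℙ (G k ⁻¹' Set.Ioc 0 (t' / a k)) := by
    have h := indep_prod_eq hindep Sum.inl Sum.inl_injective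
      (Sum.elim (fun k => Set.Ioc 0 (t' / a k)) (fun _ => Set.univ))
      (fun i => by cases i <;> simp [measurableSet_Ioc])
    simpa using h
  calc ENNReal.ofReal (t' ^ n / ∏ k, (3 * a k))
      = ENNReal.ofReal (∏ k, t' / (3 * a k)) := by
        congr 1
        rw [Finset.prod_div_distrib, Finset.prod_const, Finset.card_univ, Fintype.card_fin]
    _ = ∏ k, ENNReal.ofReal (t' / (3 * a k)) :=
        ENNReal.ofReal_prod_of_nonneg (fun k _ => div_nonneg ht'.le (by linarith [ha k]))
    _ ≤ ∏ k, ℙ (G k ⁻¹' Set.Ioc 0 (t' / a k)) := by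
        refine Finset.prod_le_prod' fun k _ => ?_
        rw [unitExp_Ioc (hGmeas k) (hGexp k) (div_nonneg ht'.le (ha k).le)]
        apply ENNReal.ofReal_le_ofReal
        have h1 : t' / a k ≤ 1 := (div_le_one (ha k)).2 (hsm k)
        have h2 := aux_exp_ub (div_nonneg ht'.le (ha k).le) h1
        calc t' / (3 * a k) = (t' / a k) / 3 := by ring
          _ ≤ 1 - Real.exp (-(t' / a k)) := h2
    _ = ℙ F := hFm.symm
    _ ≤ ℙ _ := measure_mono hFsub


end

set_option maxHeartbeats 1000000 in
/-- diversity-multiplexing tradeoff of network coding through the single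
relay `K*` maximizing `(1/(a_k G_k) + 2/(b_k H_k))⁻¹` (the NC end-to-end sum-rate
criterion), which both receives and broadcasts. With
`Ĩ_1 = log(1 + γ a_{K*} G_{K*})`, `Ĩ_2 = log(1 + γ b_{K*} H_{K*})`, the outage
probability satisfies
`limsup_{γ→∞} log ε(γ)/log γ ≤ −n(1 − 3m/(2 min{(1+μ)τ_f, (1+1/μ)τ_b}))`,
the same DMT as NC with collaborative reception and optimal broadcast relay. -/
theorem nc_optimal_relay_dmt
    {Ω : Type*} [MeasureSpace Ω] [IsProbabilityMeasure (ℙ : Measure Ω)]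
    (n : ℕ) (hn : 1 ≤ n) (a b : Fin n → ℝ) (G H : Fin n → Ω → ℝ)
    (ha : ∀ k, 0 < a k) (hb : ∀ k, 0 < b k)
    (hGmeas : ∀ k, Measurable (G k)) (hHmeas : ∀ k, Measurable (H k))
    (hindep : iIndepFun (Sum.elim G H) ℙ)
    (hGexp : ∀ k, IsUnitExp (G k)) (hHexp : ∀ k, IsUnitExp (H k))
    (K : Ω → Fin n) (hKmeas : Measurable K)
    (hK : ∀ ω k, (1 / (a k * G k ω) + 2 / (b k * H k ω))⁻¹
            ≤ (1 / (a (K ω) * G (K ω) ω) + 2 / (b (K ω) * H (K ω) ω))⁻¹)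
    (τf τb μ m : ℝ)
    (hτf : 0 < τf ∧ τf < 1) (hτb : 0 < τb ∧ τb < 1) (hτ : τf + τb = 1)
    (hμ : 0 < μ)
    (hm : 0 < m) (hm' : m < (2/3) * min ((1 + μ) * τf) ((1 + 1/μ) * τb)) :
    limsup (fun γ : ℝ =>
        Real.log (ℙ {ω |
            (2 * τf / 3) * min (Real.log (1 + γ * (a (K ω) * G (K ω) ω)))
                               (Real.log (1 + γ * (b (K ω) * H (K ω) ω)))
              < (m / (1 + μ)) * Real.log γ ∨
            (2 * τb / 3) * min (Real.log (1 + γ * (a (K ω) * G (K ω) ω)))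
                               (Real.log (1 + γ * (b (K ω) * H (K ω) ω)))
              < (m / (1 + 1/μ)) * Real.log γ}).toReal / Real.log γ) atTop
      ≤ -((n : ℝ) * (1 - 3 * m / (2 * min ((1 + μ) * τf) ((1 + 1/μ) * τb)))) := by
  obtain ⟨hτf0, hτf1⟩ := hτf
  obtain ⟨hτb0, hτb1⟩ := hτb
  have hμ1 : (0:ℝ) < 1 + μ := by linarith
  have hμ2 : (0:ℝ) < 1 + 1/μ := by positivity
  have hcf : 0 < (1 + μ) * τf := mul_pos hμ1 hτf0
  have hcb : 0 < (1 + 1/μ) * τb := mul_pos hμ2 hτb0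
  set c := min ((1 + μ) * τf) ((1 + 1/μ) * τb) with hc_def
  have hc : 0 < c := lt_min hcf hcb
  set r := 3 * m / (2 * c) with hr_def
  have hr0 : 0 < r := by positivity
  have hr1 : r < 1 := by
    rw [hr_def, div_lt_one (by positivity)]
    linarith
  set rf := 3 * m / (2 * ((1 + μ) * τf)) with hrf_def
  set rb := 3 * m / (2 * ((1 + 1/μ) * τb)) with hrb_def
  have hrf0 : 0 < rf := by positivity
  have hrb0 : 0 < rb := by positivity
  have hrf_r : rf ≤ r := by
    rw [hrf_def, hr_def]
    gcongr
    exact min_le_left _ _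
  have hrb_r : rb ≤ r := by
    rw [hrb_def, hr_def]
    gcongr
    exact min_le_right _ _
  have hrf1 : rf < 1 := lt_of_le_of_lt hrf_r hr1
  -- rate algebra identities
  have hEf : ∀ L : ℝ, (2 * τf / 3) * (rf * L) = (m / (1 + μ)) * L := by
    intro L
    rw [hrf_def]
    field_simp
  have hEb : ∀ L : ℝ, (2 * τb / 3) * (rb * L) = (m / (1 + 1/μ)) * L := by
    intro L
    rw [hrb_def]
    field_simp
  -- constants
  set P := ∏ k, max (1 / a k) (1 / b k) with hP_def
  have hP : 0 < P := Finset.prod_pos fun k _ =>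
    lt_of_lt_of_le (one_div_pos.2 (ha k)) (le_max_left _ _)
  set Cu := (6:ℝ)^n * P with hCu_def
  have hCu : 0 < Cu := by positivity
  set A := ∏ k, (3 * a k) with hA_def
  have hA : 0 < A := Finset.prod_pos fun k _ => by linarith [ha k]
  -- the two set comparisons
  have hsetA : ∀ γ : ℝ, 1 < γ →
      {ω : Ω | (2 * τf / 3) * min (Real.log (1 + γ * (a (K ω) * G (K ω) ω)))
                               (Real.log (1 + γ * (b (K ω) * H (K ω) ω)))
              < (m / (1 + μ)) * Real.log γ ∨
            (2 * τb / 3) * min (Real.log (1 + γ * (a (K ω) * G (K ω) ω)))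
                               (Real.log (1 + γ * (b (K ω) * H (K ω) ω)))
              < (m / (1 + 1/μ)) * Real.log γ}
        ⊆ {ω : Ω | min (Real.log (1 + γ * (a (K ω) * G (K ω) ω)))
              (Real.log (1 + γ * (b (K ω) * H (K ω) ω))) < r * Real.log γ} := by
    intro γ hγ ω hω
    have hL : 0 < Real.log γ := Real.log_pos hγ
    simp only [Set.mem_setOf_eq] at hω ⊢
    rcases hω with h | h
    · have h2 : (2 * τf / 3) * min (Real.log (1 + γ * (a (K ω) * G (K ω) ω)))
          (Real.log (1 + γ * (b (K ω) * H (K ω) ω))) < (2 * τf / 3) * (rf * Real.log γ) := by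
        rw [hEf]; exact h
      have h3 := lt_of_mul_lt_mul_left h2 (by positivity : (0:ℝ) ≤ 2 * τf / 3)
      exact lt_of_lt_of_le h3 (mul_le_mul_of_nonneg_right hrf_r hL.le)
    · have h2 : (2 * τb / 3) * min (Real.log (1 + γ * (a (K ω) * G (K ω) ω)))
          (Real.log (1 + γ * (b (K ω) * H (K ω) ω))) < (2 * τb / 3) * (rb * Real.log γ) := by
        rw [hEb]; exact h
      have h3 := lt_of_mul_lt_mul_left h2 (by positivity : (0:ℝ) ≤ 2 * τb / 3)
      exact lt_of_lt_of_le h3 (mul_le_mul_of_nonneg_right hrb_r hL.le)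
  have hsetB : ∀ γ : ℝ, 1 < γ →
      {ω : Ω | min (Real.log (1 + γ * (a (K ω) * G (K ω) ω)))
              (Real.log (1 + γ * (b (K ω) * H (K ω) ω))) < rf * Real.log γ}
        ⊆ {ω : Ω | (2 * τf / 3) * min (Real.log (1 + γ * (a (K ω) * G (K ω) ω)))
                               (Real.log (1 + γ * (b (K ω) * H (K ω) ω)))
              < (m / (1 + μ)) * Real.log γ ∨
            (2 * τb / 3) * min (Real.log (1 + γ * (a (K ω) * G (K ω) ω)))
                               (Real.log (1 + γ * (b (K ω) * H (K ω) ω)))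
              < (m / (1 + 1/μ)) * Real.log γ} := by
    intro γ hγ ω hω
    simp only [Set.mem_setOf_eq] at hω ⊢
    left
    rw [← hEf]
    exact mul_lt_mul_of_pos_left hω (by positivity)
  -- eventual hypotheses
  have hev1 : ∀ᶠ γ : ℝ in atTop, 1 < γ := eventually_gt_atTop 1
  have hev2 : ∀ᶠ γ : ℝ in atTop, 2 ≤ γ ^ rf := (tendsto_rpow_atTop hrf0).eventually_ge_atTop 2
  have hrpow0 : Tendsto (fun γ : ℝ => γ ^ (rf - 1)) atTop (nhds 0) := by
    have := tendsto_rpow_neg_atTop (by linarith : 0 < 1 - rf)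
    simpa [neg_sub] using this
  have hev3 : ∀ᶠ γ : ℝ in atTop, ∀ k, (γ ^ rf - 1) / (2 * γ) ≤ a k := by
    rw [eventually_all]
    intro k
    filter_upwards [hev1, hrpow0.eventually_lt_const (ha k)] with γ hγ hk
    have hγ0 : (0:ℝ) < γ := lt_trans one_pos hγ
    have h1 : (γ ^ rf - 1) / (2 * γ) ≤ γ ^ rf / (2 * γ) := by
      gcongr <;> linarith
    have h2 : γ ^ rf / (2 * γ) ≤ γ ^ (rf - 1) := by
      rw [Real.rpow_sub hγ0, Real.rpow_one]
      rw [div_le_div_iff₀ (by linarith) hγ0]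
      nlinarith [Real.rpow_pos_of_pos hγ0 rf]
    linarith
  have hev4 : ∀ᶠ γ : ℝ in atTop,
      max ((n:ℝ) * Real.log 4 + Real.log A) 1 ≤ Real.log γ :=
    Real.tendsto_log_atTop.eventually_ge_atTop _
  -- lower bound on ε and on the quotient
  have hlb : ∀ᶠ γ : ℝ in atTop,
      (n:ℝ) * (rf - 1) - 1 ≤
        Real.log (ℙ {ω |
            (2 * τf / 3) * min (Real.log (1 + γ * (a (K ω) * G (K ω) ω)))
                               (Real.log (1 + γ * (b (K ω) * H (K ω) ω)))
              < (m / (1 + μ)) * Real.log γ ∨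
            (2 * τb / 3) * min (Real.log (1 + γ * (a (K ω) * G (K ω) ω)))
                               (Real.log (1 + γ * (b (K ω) * H (K ω) ω)))
              < (m / (1 + 1/μ)) * Real.log γ}).toReal / Real.log γ := by
    filter_upwards [hev1, hev2, hev3, hev4] with γ hγ hγ2 hγ3 hγ4
    have hγ0 : (0:ℝ) < γ := lt_trans one_pos hγ
    have hL : 0 < Real.log γ := Real.log_pos hγ
    have hγrf : 1 < γ ^ rf := (Real.one_lt_rpow_iff_of_pos hγ0).2 (Or.inl ⟨hγ, hrf0⟩)
    set t' : ℝ := (γ ^ rf - 1) / (2 * γ) with ht'_def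
    have ht' : 0 < t' := div_pos (by linarith) (by linarith)
    have hBle := le_trans (stepB a b G H ha hGmeas hindep hGexp K hγ hrf0 hγ3)
      (measure_mono (hsetB γ hγ))
    set S := ℙ {ω |
            (2 * τf / 3) * min (Real.log (1 + γ * (a (K ω) * G (K ω) ω)))
                               (Real.log (1 + γ * (b (K ω) * H (K ω) ω)))
              < (m / (1 + μ)) * Real.log γ ∨
            (2 * τb / 3) * min (Real.log (1 + γ * (a (K ω) * G (K ω) ω)))
                               (Real.log (1 + γ * (b (K ω) * H (K ω) ω)))
              < (m / (1 + 1/μ)) * Real.log γ} with hS_def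
    have hlow : t' ^ n / A ≤ S.toReal := by
      rw [← ENNReal.ofReal_le_iff_le_toReal (measure_ne_top _ _)]
      exact hBle
    have hpos : 0 < S.toReal :=
      lt_of_lt_of_le (by positivity) hlow
    -- t' ≥ γ^(rf-1)/4
    have ht'lb : γ ^ (rf - 1) / 4 ≤ t' := by
      rw [ht'_def, Real.rpow_sub hγ0, Real.rpow_one, div_div]
      rw [div_le_div_iff₀ (by positivity) (by linarith)]
      nlinarith
    have hlog1 : Real.log (γ ^ (rf - 1) / 4) ≤ Real.log t' :=
      Real.log_le_log (by positivity) ht'lb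
    have hlog2 : Real.log (γ ^ (rf - 1) / 4) = (rf - 1) * Real.log γ - Real.log 4 := by
      rw [Real.log_div (by positivity) (by norm_num), Real.log_rpow hγ0]
    have hlogS : (n:ℝ) * ((rf - 1) * Real.log γ - Real.log 4) - Real.log A
        ≤ Real.log S.toReal := by
      have h1 : Real.log (t' ^ n / A) ≤ Real.log S.toReal :=
        Real.log_le_log (by positivity) hlow
      rw [Real.log_div (by positivity) (ne_of_gt hA), Real.log_pow] at h1
      have h2 : (n:ℝ) * ((rf - 1) * Real.log γ - Real.log 4) ≤ (n:ℝ) * Real.log t' := by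
        apply mul_le_mul_of_nonneg_left _ (Nat.cast_nonneg n)
        rw [← hlog2]; exact hlog1
      linarith
    have hdiv : ((n:ℝ) * (rf - 1) * Real.log γ - ((n:ℝ) * Real.log 4 + Real.log A)) / Real.log γ
        ≤ Real.log S.toReal / Real.log γ := by
      apply div_le_div_of_nonneg_right _ hL.le
      · linarith
    have hquot : ((n:ℝ) * Real.log 4 + Real.log A) / Real.log γ ≤ 1 := by
      rw [div_le_one hL]
      exact le_trans (le_max_left _ _) hγ4
    have hsplit : ((n:ℝ) * (rf - 1) * Real.log γ - ((n:ℝ) * Real.log 4 + Real.log A)) / Real.log γ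
        = (n:ℝ) * (rf - 1) - ((n:ℝ) * Real.log 4 + Real.log A) / Real.log γ := by
      field_simp
    rw [hsplit] at hdiv
    linarith
  -- upper bound
  have hub : ∀ᶠ γ : ℝ in atTop,
      Real.log (ℙ {ω |
            (2 * τf / 3) * min (Real.log (1 + γ * (a (K ω) * G (K ω) ω)))
                               (Real.log (1 + γ * (b (K ω) * H (K ω) ω)))
              < (m / (1 + μ)) * Real.log γ ∨
            (2 * τb / 3) * min (Real.log (1 + γ * (a (K ω) * G (K ω) ω)))
                               (Real.log (1 + γ * (b (K ω) * H (K ω) ω)))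
              < (m / (1 + 1/μ)) * Real.log γ}).toReal / Real.log γ
        ≤ Real.log Cu / Real.log γ + (n:ℝ) * (r - 1) := by
    filter_upwards [hev1, hev2, hev3] with γ hγ hγ2 hγ3
    have hγ0 : (0:ℝ) < γ := lt_trans one_pos hγ
    have hL : 0 < Real.log γ := Real.log_pos hγ
    have hγr : 1 < γ ^ r := (Real.one_lt_rpow_iff_of_pos hγ0).2 (Or.inl ⟨hγ, hr0⟩)
    have hγrf : 1 < γ ^ rf := (Real.one_lt_rpow_iff_of_pos hγ0).2 (Or.inl ⟨hγ, hrf0⟩)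
    set t : ℝ := (γ ^ r - 1) / γ with ht_def
    have ht : 0 < t := div_pos (by linarith) hγ0
    set S := ℙ {ω |
            (2 * τf / 3) * min (Real.log (1 + γ * (a (K ω) * G (K ω) ω)))
                               (Real.log (1 + γ * (b (K ω) * H (K ω) ω)))
              < (m / (1 + μ)) * Real.log γ ∨
            (2 * τb / 3) * min (Real.log (1 + γ * (a (K ω) * G (K ω) ω)))
                               (Real.log (1 + γ * (b (K ω) * H (K ω) ω)))
              < (m / (1 + 1/μ)) * Real.log γ} with hS_def
    have hup : S ≤ ENNReal.ofReal (Cu * t ^ n) :=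
      le_trans (measure_mono (hsetA γ hγ))
        (stepA a b G H ha hb hGmeas hHmeas hindep hGexp hHexp K hK hγ hr0)
    have hupR : S.toReal ≤ Cu * t ^ n :=
      ENNReal.toReal_le_of_le_ofReal (by positivity) hup
    -- positivity of S.toReal from stepB
    have hBle := le_trans (stepB a b G H ha hGmeas hindep hGexp K hγ hrf0 hγ3)
      (measure_mono (hsetB γ hγ))
    have ht'rf : (0:ℝ) < (γ ^ rf - 1) / (2 * γ) := div_pos (by linarith) (by linarith)
    have hlow : ((γ ^ rf - 1) / (2 * γ)) ^ n / A ≤ S.toReal := by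
      rw [← ENNReal.ofReal_le_iff_le_toReal (measure_ne_top _ _)]
      exact hBle
    have hpos : 0 < S.toReal := lt_of_lt_of_le (by positivity) hlow
    have hlogup : Real.log S.toReal ≤ Real.log Cu + (n:ℝ) * ((r - 1) * Real.log γ) := by
      have h1 : Real.log S.toReal ≤ Real.log (Cu * t ^ n) := Real.log_le_log hpos hupR
      rw [Real.log_mul (ne_of_gt hCu) (by positivity), Real.log_pow] at h1
      have ht_le : t ≤ γ ^ (r - 1) := by
        rw [ht_def, Real.rpow_sub hγ0, Real.rpow_one]
        gcongr
        linarith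
      have h2 : Real.log t ≤ (r - 1) * Real.log γ := by
        rw [← Real.log_rpow hγ0]
        exact Real.log_le_log ht ht_le
      have h3 : (n:ℝ) * Real.log t ≤ (n:ℝ) * ((r - 1) * Real.log γ) :=
        mul_le_mul_of_nonneg_left h2 (Nat.cast_nonneg n)
      linarith
    have hsplit : (Real.log Cu + (n:ℝ) * ((r - 1) * Real.log γ)) / Real.log γ
        = Real.log Cu / Real.log γ + (n:ℝ) * (r - 1) := by
      field_simp
    calc Real.log S.toReal / Real.log γ
        ≤ (Real.log Cu + (n:ℝ) * ((r - 1) * Real.log γ)) / Real.log γ :=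
          div_le_div_of_nonneg_right hlogup hL.le
      _ = Real.log Cu / Real.log γ + (n:ℝ) * (r - 1) := hsplit
  -- assemble
  have hco : IsCoboundedUnder (· ≤ ·) atTop (fun γ : ℝ =>
        Real.log (ℙ {ω |
            (2 * τf / 3) * min (Real.log (1 + γ * (a (K ω) * G (K ω) ω)))
                               (Real.log (1 + γ * (b (K ω) * H (K ω) ω)))
              < (m / (1 + μ)) * Real.log γ ∨
            (2 * τb / 3) * min (Real.log (1 + γ * (a (K ω) * G (K ω) ω)))
                               (Real.log (1 + γ * (b (K ω) * H (K ω) ω)))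
              < (m / (1 + 1/μ)) * Real.log γ}).toReal / Real.log γ) :=
    isCoboundedUnder_le_of_eventually_le atTop hlb
  have hg : Tendsto (fun γ : ℝ => Real.log Cu / Real.log γ + (n:ℝ) * (r - 1)) atTop
      (nhds (0 + (n:ℝ) * (r - 1))) :=
    (Tendsto.div_atTop tendsto_const_nhds Real.tendsto_log_atTop).add tendsto_const_nhds
  calc limsup _ atTop
      ≤ limsup (fun γ : ℝ => Real.log Cu / Real.log γ + (n:ℝ) * (r - 1)) atTop :=
        limsup_le_limsup hub hco hg.isBoundedUnder_le
    _ = 0 + (n:ℝ) * (r - 1) := hg.limsup_eq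
    _ = -((n : ℝ) * (1 - 3 * m / (2 * c))) := by rw [hr_def]; ring
end
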